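/- arXiv:2002.08576 — 5 statements merged into one kernel-verified Lean document; each statement's English description precedes it below -/
import Mathlib

section
/- Let π be a secant plane. If |γ(π)| = k, then |α(π)| = k(k-1)/2. -/
open Submodule Set

/-- The points of `PG(3,q)`: the 1-dimensional subspaces of a 4-dimensional
vector space over the field `K` of order `q`. -/
def pgPoint (K : Type) [Field K] : Set (Submodule K (Fin 4 → K)) :=
  {W | Module.finrank K ↥W = 1}

/-- The lines of `PG(3,q)`: the 2-dimensional subspaces. -/
def pgLine (K : Type) [Field K] : Set (Submodule K (Fin 4 → K)) :=
  {W | Module.finrank K ↥W = 2}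

/-- The planes of `PG(3,q)`: the 3-dimensional subspaces. -/
def pgPlane (K : Type) [Field K] : Set (Submodule K (Fin 4 → K)) :=
  {W | Module.finrank K ↥W = 3}

/-- The lines of the family `S` passing through the point `p`. -/
def linesThru (K : Type) [Field K] (S : Set (Submodule K (Fin 4 → K)))
    (p : Submodule K (Fin 4 → K)) : Set (Submodule K (Fin 4 → K)) :=
  {l | l ∈ S ∧ p ≤ l}

/-- The lines of the family `S` contained in the plane `π` (the set `S_π`). -/
def linesIn (K : Type) [Field K] (S : Set (Submodule K (Fin 4 → K)))
    (π : Submodule K (Fin 4 → K)) : Set (Submodule K (Fin 4 → K)) :=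
  {l | l ∈ S ∧ l ≤ π}

/-- The lines of `S_π` belonging to the pencil of lines of the plane `π`
through the point `p`. -/
def pencilS (K : Type) [Field K] (S : Set (Submodule K (Fin 4 → K)))
    (p π : Submodule K (Fin 4 → K)) : Set (Submodule K (Fin 4 → K)) :=
  {l | l ∈ S ∧ p ≤ l ∧ l ≤ π}

/-- Property (P1): every point lies on exactly `q(q+1)/2` or exactly `q^2`
lines of `S`, and both numbers are attained. -/
def P1 (K : Type) [Field K] (S : Set (Submodule K (Fin 4 → K))) (q : ℕ) : Prop :=
  (∀ p ∈ pgPoint K, (linesThru K S p).ncard = q * (q + 1) / 2 ∨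
      (linesThru K S p).ncard = q ^ 2) ∧
  (∃ p ∈ pgPoint K, (linesThru K S p).ncard = q * (q + 1) / 2) ∧
  (∃ p ∈ pgPoint K, (linesThru K S p).ncard = q ^ 2)

/-- Property (P2): every plane contains exactly `q(q+1)/2` or exactly `q^2`
lines of `S`. -/
def P2 (K : Type) [Field K] (S : Set (Submodule K (Fin 4 → K))) (q : ℕ) : Prop :=
  ∀ π ∈ pgPlane K, (linesIn K S π).ncard = q * (q + 1) / 2 ∨
    (linesIn K S π).ncard = q ^ 2

/-- Property (P2a): if a plane contains `q^2` lines of `S`, then every pencil of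
lines in that plane contains `0` or `q` lines of `S`. -/
def P2a (K : Type) [Field K] (S : Set (Submodule K (Fin 4 → K))) (q : ℕ) : Prop :=
  ∀ π ∈ pgPlane K, (linesIn K S π).ncard = q ^ 2 →
    ∀ p ∈ pgPoint K, p ≤ π →
      (pencilS K S p π).ncard = 0 ∨ (pencilS K S p π).ncard = q

/-- Property (P2b): if a plane contains `q(q+1)/2` lines of `S`, then every
pencil of lines in that plane contains `(q-1)/2`, `(q+1)/2` or `q` lines of `S`. -/
def P2b (K : Type) [Field K] (S : Set (Submodule K (Fin 4 → K))) (q : ℕ) : Prop :=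
  ∀ π ∈ pgPlane K, (linesIn K S π).ncard = q * (q + 1) / 2 →
    ∀ p ∈ pgPoint K, p ≤ π →
      (pencilS K S p π).ncard = (q - 1) / 2 ∨
      (pencilS K S p π).ncard = (q + 1) / 2 ∨
      (pencilS K S p π).ncard = q

/-- A point is black if it lies on exactly `q^2` lines of `S`. -/
def IsBlack (K : Type) [Field K] (S : Set (Submodule K (Fin 4 → K))) (q : ℕ)
    (p : Submodule K (Fin 4 → K)) : Prop :=
  p ∈ pgPoint K ∧ (linesThru K S p).ncard = q ^ 2

/-- A plane is tangent if it contains exactly `q^2` lines of `S`. -/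
def IsTangent (K : Type) [Field K] (S : Set (Submodule K (Fin 4 → K))) (q : ℕ)
    (π : Submodule K (Fin 4 → K)) : Prop :=
  π ∈ pgPlane K ∧ (linesIn K S π).ncard = q ^ 2

/-- A plane is secant if it contains exactly `q(q+1)/2` lines of `S`. -/
def IsSecant (K : Type) [Field K] (S : Set (Submodule K (Fin 4 → K))) (q : ℕ)
    (π : Submodule K (Fin 4 → K)) : Prop :=
  π ∈ pgPlane K ∧ (linesIn K S π).ncard = q * (q + 1) / 2

/-- For a secant plane `π`, the set `α(π)` of points of `π` lying on exactly
`(q-1)/2` lines of `S_π`. -/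
def alphaSet (K : Type) [Field K] (S : Set (Submodule K (Fin 4 → K))) (q : ℕ)
    (π : Submodule K (Fin 4 → K)) : Set (Submodule K (Fin 4 → K)) :=
  {p | p ∈ pgPoint K ∧ p ≤ π ∧ (pencilS K S p π).ncard = (q - 1) / 2}

/-- For a secant plane `π`, the set `β(π)` of points of `π` lying on exactly
`(q+1)/2` lines of `S_π`. -/
def betaSet (K : Type) [Field K] (S : Set (Submodule K (Fin 4 → K))) (q : ℕ)
    (π : Submodule K (Fin 4 → K)) : Set (Submodule K (Fin 4 → K)) :=
  {p | p ∈ pgPoint K ∧ p ≤ π ∧ (pencilS K S p π).ncard = (q + 1) / 2}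

/-- For a secant plane `π`, the set `γ(π)` of points of `π` lying on exactly
`q` lines of `S_π`. -/
def gammaSet (K : Type) [Field K] (S : Set (Submodule K (Fin 4 → K))) (q : ℕ)
    (π : Submodule K (Fin 4 → K)) : Set (Submodule K (Fin 4 → K)) :=
  {p | p ∈ pgPoint K ∧ p ≤ π ∧ (pencilS K S p π).ncard = q}

section Aux
set_option linter.unusedSectionVars false
variable {K : Type} [Field K] [Fintype K]

lemma aux_finite : Finite (Submodule K (Fin 4 → K)) :=
  Finite.of_injective (fun W => (W : Set (Fin 4 → K))) SetLike.coe_injective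

/-- counting points inside a submodule -/
lemma aux_points_count (W : Submodule K (Fin 4 → K)) :
    {p | p ∈ pgPoint K ∧ p ≤ W}.ncard * (Fintype.card K - 1)
      = Fintype.card K ^ (Module.finrank K W) - 1 := by
  classical
  haveI : Finite (Submodule K (Fin 4 → K)) := aux_finite
  haveI : Fintype (Submodule K (Fin 4 → K)) := Fintype.ofFinite _
  set q := Fintype.card K with hqdef
  set Ω : Finset (Fin 4 → K) := (W : Set (Fin 4 → K)).toFinset.erase 0 with hΩ
  set Pf : Finset (Submodule K (Fin 4 → K)) := {p | p ∈ pgPoint K ∧ p ≤ W}.toFinset with hPfdef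
  have hcardW : ∀ (U : Submodule K (Fin 4 → K)),
      ((U : Set (Fin 4 → K)).toFinset.erase 0).card = q ^ (Module.finrank K U) - 1 := by
    intro U
    have h0 : (0 : Fin 4 → K) ∈ (U : Set (Fin 4 → K)).toFinset := by
      simp [Submodule.zero_mem]
    rw [Finset.card_erase_of_mem h0, Set.toFinset_card]
    congr 1
    rw [show (Fintype.card ↥(U : Set (Fin 4 → K))) = Fintype.card ↥U from rfl]
    exact Module.card_eq_pow_finrank
  have hmap : ∀ v ∈ Ω, (Submodule.span K {v}) ∈ Pf := by
    intro v hv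
    rw [hΩ, Finset.mem_erase, Set.mem_toFinset] at hv
    obtain ⟨hv0, hvW⟩ := hv
    rw [hPfdef, Set.mem_toFinset]
    exact ⟨finrank_span_singleton hv0, span_le.mpr (by simpa using hvW)⟩
  have hfib : ∀ p ∈ Pf, (Ω.filter (fun v => Submodule.span K {v} = p)).card = q - 1 := by
    intro p hp
    rw [hPfdef, Set.mem_toFinset] at hp
    obtain ⟨hp1, hpW⟩ := hp
    have heq : Ω.filter (fun v => Submodule.span K {v} = p)
        = (p : Set (Fin 4 → K)).toFinset.erase 0 := by
      ext v
      simp only [Finset.mem_filter, Finset.mem_erase, Set.mem_toFinset, hΩ, SetLike.mem_coe]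
      constructor
      · rintro ⟨⟨hv0, _⟩, hsp⟩
        exact ⟨hv0, hsp ▸ Submodule.mem_span_singleton_self v⟩
      · rintro ⟨hv0, hvp⟩
        have hle : Submodule.span K {v} ≤ p := span_le.mpr (by simpa using hvp)
        have heq2 : Submodule.span K {v} = p :=
          Submodule.eq_of_le_of_finrank_eq hle
            (by rw [finrank_span_singleton hv0, hp1])
        exact ⟨⟨hv0, hpW hvp⟩, heq2⟩
    rw [heq, hcardW p, hp1, pow_one]
  have hcount := Finset.card_eq_sum_card_fiberwise hmap
  rw [Finset.sum_congr rfl hfib, Finset.sum_const, smul_eq_mul] at hcount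
  rw [Set.ncard_eq_toFinset_card', ← hPfdef, ← hcount, hcardW W]


lemma aux_pts_line (q : ℕ) (hq : Fintype.card K = q) (hq2 : 2 ≤ q)
    (l : Submodule K (Fin 4 → K)) (hl : Module.finrank K ↥l = 2)
    (hcnt : {p | p ∈ pgPoint K ∧ p ≤ l}.ncard * (Fintype.card K - 1)
      = Fintype.card K ^ (Module.finrank K l) - 1) :
    {p | p ∈ pgPoint K ∧ p ≤ l}.ncard = q + 1 := by
  rw [hl, hq] at hcnt
  have h2 : q ^ 2 - 1 = (q + 1) * (q - 1) := by
    have : q ^ 2 = q * q := sq q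
    rw [this]
    obtain ⟨r, rfl⟩ : ∃ r, q = r + 2 := ⟨q - 2, by omega⟩
    have : (r+2)*(r+2) = r*r + 4*r + 4 := by ring
    have h3 : (r+2+1)*(r+2-1) = r*r + 4*r + 3 := by
      have : r+2-1 = r+1 := by omega
      rw [this]; ring
    omega
  rw [h2] at hcnt
  exact Nat.eq_of_mul_eq_mul_right (by omega) hcnt

lemma aux_pts_plane (q : ℕ) (hq : Fintype.card K = q) (hq2 : 2 ≤ q)
    (π : Submodule K (Fin 4 → K)) (hπ : Module.finrank K ↥π = 3)
    (hcnt : {p | p ∈ pgPoint K ∧ p ≤ π}.ncard * (Fintype.card K - 1)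
      = Fintype.card K ^ (Module.finrank K π) - 1) :
    {p | p ∈ pgPoint K ∧ p ≤ π}.ncard = q^2 + q + 1 := by
  rw [hπ, hq] at hcnt
  have h2 : q ^ 3 - 1 = (q^2 + q + 1) * (q - 1) := by
    obtain ⟨r, rfl⟩ : ∃ r, q = r + 2 := ⟨q - 2, by omega⟩
    have h3 : (r+2)^3 = r*r*r + 6*(r*r) + 12*r + 8 := by ring
    have h4 : ((r+2)^2 + (r+2) + 1)*(r+2-1) = r*r*r + 6*(r*r) + 12*r + 7 := by
      have : r+2-1 = r+1 := by omega
      rw [this]; ring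
    omega
  rw [h2] at hcnt
  exact Nat.eq_of_mul_eq_mul_right (by omega) hcnt

lemma aux_meet (π l₁ l₂ : Submodule K (Fin 4 → K)) (hπ : Module.finrank K ↥π = 3)
    (h₁ : Module.finrank K ↥l₁ = 2) (h₂ : Module.finrank K ↥l₂ = 2)
    (h₁π : l₁ ≤ π) (h₂π : l₂ ≤ π) (hne : l₁ ≠ l₂) :
    ∃ p₀, (p₀ ∈ pgPoint K ∧ p₀ ≤ l₁ ∧ p₀ ≤ l₂) ∧
      ∀ p, (p ∈ pgPoint K ∧ p ≤ l₁ ∧ p ≤ l₂) → p = p₀ := by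
  have hsup_le : l₁ ⊔ l₂ ≤ π := sup_le h₁π h₂π
  have hle3 : Module.finrank K ↥(l₁ ⊔ l₂) ≤ 3 := hπ ▸ Submodule.finrank_mono hsup_le
  have hge : 2 ≤ Module.finrank K ↥(l₁ ⊔ l₂) := h₁ ▸ Submodule.finrank_mono le_sup_left
  have hsup3 : Module.finrank K ↥(l₁ ⊔ l₂) = 3 := by
    by_contra h
    have h2' : Module.finrank K ↥(l₁ ⊔ l₂) = 2 := by omega
    have e1 : l₁ = l₁ ⊔ l₂ :=
      Submodule.eq_of_le_of_finrank_eq le_sup_left (by rw [h₁, h2'])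
    have e2 : l₂ = l₁ ⊔ l₂ :=
      Submodule.eq_of_le_of_finrank_eq le_sup_right (by rw [h₂, h2'])
    exact hne (e1.trans e2.symm)
  have hinf : Module.finrank K ↥(l₁ ⊓ l₂) = 1 := by
    have := Submodule.finrank_sup_add_finrank_inf_eq l₁ l₂
    rw [h₁, h₂, hsup3] at this; omega
  refine ⟨l₁ ⊓ l₂, ⟨hinf, inf_le_left, inf_le_right⟩, ?_⟩
  rintro p ⟨hp1, hpl1, hpl2⟩
  exact Submodule.eq_of_le_of_finrank_eq (le_inf hpl1 hpl2) (by rw [hinf]; exact hp1)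

lemma aux_arith (m A B G : ℕ) (hm : 1 ≤ m)
    (e1 : A + B + G = (2*m+1)*(2*m+1) + (2*m+1) + 1)
    (e2 : A*m + B*(m+1) + G*(2*m+1) = (2*m+1)*(m+1) * (2*m+1+1))
    (e3 : A*(m*m-m) + B*((m+1)*(m+1)-(m+1)) + G*((2*m+1)*(2*m+1)-(2*m+1))
      = (2*m+1)*(m+1)*((2*m+1)*(m+1)) - (2*m+1)*(m+1)) :
    A = G*(G-1)/2 := by
  have hs1 : m ≤ m*m := Nat.le_mul_of_pos_left m (by omega)
  have hs2 : m+1 ≤ (m+1)*(m+1) := Nat.le_mul_of_pos_left (m+1) (by omega)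
  have hs3 : 2*m+1 ≤ (2*m+1)*(2*m+1) := Nat.le_mul_of_pos_left (2*m+1) (by omega)
  have hs4 : (2*m+1)*(m+1) ≤ (2*m+1)*(m+1)*((2*m+1)*(m+1)) :=
    Nat.le_mul_of_pos_left _ (by positivity)
  zify [hs1, hs2, hs3, hs4] at e1 e2 e3
  have hm' : (1:ℤ) ≤ (m:ℤ) := by exact_mod_cast hm
  have key : (G:ℤ) * ((m:ℤ)*((m:ℤ)+1)) = 2*(m:ℤ)*((m:ℤ)+1)^2 := by
    linear_combination e3 - 2*(m:ℤ)*e2 + (m:ℤ)*((m:ℤ)+1)*e1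
  have hmm : ((m:ℤ)*((m:ℤ)+1)) ≠ 0 := by nlinarith
  have hGz : (G:ℤ) = 2*(m:ℤ)+2 := by
    apply mul_right_cancel₀ hmm
    linear_combination key
  have hAz : (A:ℤ) = 2*(m:ℤ)^2+3*(m:ℤ)+1 := by
    linear_combination ((m:ℤ)+1)*e1 - e2 + (m:ℤ)*hGz
  have hGn : G = 2*m+2 := by exact_mod_cast hGz
  have hAn : A = 2*m^2+3*m+1 := by exact_mod_cast hAz
  subst hGn hAn
  have h5 : (2*m+2)*((2*m+2)-1) = 2*(2*m^2+3*m+1) := by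
    have : 2*m+2-1 = 2*m+1 := by omega
    rw [this]; ring
  rw [h5, Nat.mul_div_cancel_left _ (by norm_num)]
end Aux

/-- For a secant plane `π`, if `|γ(π)| = k` then
`|α(π)| = k(k-1)/2`. -/
theorem stmt_9 (K : Type) [Field K] [Fintype K] (q : ℕ) (hq : Fintype.card K = q)
    (hq_odd : Odd q) (S : Set (Submodule K (Fin 4 → K))) (hS : S ⊆ pgLine K)
    (h1 : P1 K S q) (h2 : P2 K S q) (h2a : P2a K S q) (h2b : P2b K S q) :
    ∀ π, IsSecant K S q π → ∀ k : ℕ, (gammaSet K S q π).ncard = k →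
      (alphaSet K S q π).ncard = k * (k - 1) / 2 := by
  classical
  haveI : Finite (Submodule K (Fin 4 → K)) := aux_finite
  haveI : Fintype (Submodule K (Fin 4 → K)) := Fintype.ofFinite _
  have hq2 : 2 ≤ q := hq ▸ Fintype.one_lt_card
  obtain ⟨m, hm⟩ := hq_odd
  subst hm
  have hm1 : 1 ≤ m := by omega
  rintro π ⟨hπpl, hπsec⟩ k hk
  have hπ3 : Module.finrank K ↥π = 3 := hπpl
  set Pf : Finset (Submodule K (Fin 4 → K)) := {p | p ∈ pgPoint K ∧ p ≤ π}.toFinset with hPf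
  set Tf : Finset (Submodule K (Fin 4 → K)) := (linesIn K S π).toFinset with hTf
  have hTcard : Tf.card = (2*m+1)*(m+1) := by
    rw [show Tf.card = (linesIn K S π).ncard from (Set.ncard_eq_toFinset_card' _).symm, hπsec]
    have h : (2*m+1)*((2*m+1)+1) = 2*((2*m+1)*(m+1)) := by ring
    rw [h, Nat.mul_div_cancel_left _ (by norm_num : (0:ℕ) < 2)]
  -- pencil counts
  have hc : ∀ p, (pencilS K S p π).ncard = (Tf.filter (fun l => p ≤ l)).card := by
    intro p
    have h : pencilS K S p π = ↑(Tf.filter (fun l => p ≤ l)) := by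
      ext l
      simp only [pencilS, Set.mem_setOf_eq, Finset.coe_filter, hTf, Set.mem_toFinset]
      simp only [linesIn, Set.mem_setOf_eq]
      tauto
    rw [h, Set.ncard_coe_finset]
  have hlinerank : ∀ l ∈ Tf, Module.finrank K ↥l = 2 ∧ l ≤ π := by
    intro l hl
    rw [hTf, Set.mem_toFinset] at hl
    exact ⟨hS hl.1, hl.2⟩
  have hlinepts : ∀ l ∈ Tf, (Pf.filter (fun p => p ≤ l)).card = 2*m+1 + 1 := by
    intro l hl
    obtain ⟨hl2, hlπ⟩ := hlinerank l hl
    have hPeq : Pf.filter (fun p => p ≤ l) = {p | p ∈ pgPoint K ∧ p ≤ l}.toFinset := by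
      ext p
      simp only [Finset.mem_filter, Set.mem_toFinset, Set.mem_setOf_eq, hPf]
      exact ⟨fun ⟨⟨h1, _⟩, h3⟩ => ⟨h1, h3⟩, fun ⟨h1, h3⟩ => ⟨⟨h1, h3.trans hlπ⟩, h3⟩⟩
    rw [hPeq, ← Set.ncard_eq_toFinset_card']
    exact aux_pts_line (2*m+1) hq hq2 l hl2 (aux_points_count l)
  have hsum1 : ∑ p ∈ Pf, (Tf.filter (fun l => p ≤ l)).card = Tf.card * (2*m+1+1) := by
    simp_rw [Finset.card_filter]
    rw [Finset.sum_comm]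
    have h : ∀ l ∈ Tf, (∑ p ∈ Pf, if p ≤ l then 1 else 0) = 2*m+1+1 := by
      intro l hl
      rw [← Finset.card_filter]
      exact hlinepts l hl
    rw [Finset.sum_congr rfl h, Finset.sum_const, smul_eq_mul]
  have hmeet : ∀ x ∈ Tf.offDiag, (Pf.filter (fun p => p ≤ x.1 ∧ p ≤ x.2)).card = 1 := by
    intro x hx
    rw [Finset.mem_offDiag] at hx
    obtain ⟨h1, h2, hne⟩ := hx
    obtain ⟨r1, l1π⟩ := hlinerank _ h1
    obtain ⟨r2, l2π⟩ := hlinerank _ h2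
    obtain ⟨p₀, ⟨hp₀, hp₀1, hp₀2⟩, huniq⟩ := aux_meet π x.1 x.2 hπ3 r1 r2 l1π l2π hne
    rw [Finset.card_eq_one]
    refine ⟨p₀, ?_⟩
    ext p
    simp only [Finset.mem_filter, Finset.mem_singleton, hPf, Set.mem_toFinset, Set.mem_setOf_eq]
    constructor
    · rintro ⟨⟨hpt, -⟩, hpl1, hpl2⟩
      exact huniq p ⟨hpt, hpl1, hpl2⟩
    · rintro rfl
      exact ⟨⟨hp₀, le_trans hp₀1 l1π⟩, hp₀1, hp₀2⟩
  have hoffd : ∀ p : Submodule K (Fin 4 → K), (Tf.filter (fun l => p ≤ l)).offDiag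
      = Tf.offDiag.filter (fun x => p ≤ x.1 ∧ p ≤ x.2) := by
    intro p
    ext x
    simp only [Finset.mem_offDiag, Finset.mem_filter]
    tauto
  have hsum2 : ∑ p ∈ Pf, ((Tf.filter (fun l => p ≤ l)).card * (Tf.filter (fun l => p ≤ l)).card
      - (Tf.filter (fun l => p ≤ l)).card) = Tf.card * Tf.card - Tf.card := by
    calc ∑ p ∈ Pf, ((Tf.filter (fun l => p ≤ l)).card * (Tf.filter (fun l => p ≤ l)).card
          - (Tf.filter (fun l => p ≤ l)).card)
        = ∑ p ∈ Pf, ((Tf.filter (fun l => p ≤ l)).offDiag).card := by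
          simp_rw [Finset.offDiag_card]
      _ = ∑ p ∈ Pf, (Tf.offDiag.filter (fun x => p ≤ x.1 ∧ p ≤ x.2)).card := by
          simp_rw [hoffd]
      _ = ∑ x ∈ Tf.offDiag, (Pf.filter (fun p => p ≤ x.1 ∧ p ≤ x.2)).card := by
          simp_rw [Finset.card_filter]
          rw [Finset.sum_comm]
      _ = ∑ _x ∈ Tf.offDiag, 1 := Finset.sum_congr rfl hmeet
      _ = Tf.offDiag.card := by rw [Finset.sum_const, smul_eq_mul, mul_one]
      _ = Tf.card * Tf.card - Tf.card := by rw [Finset.offDiag_card]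
  -- trichotomy
  have htri : ∀ p ∈ Pf, (Tf.filter (fun l => p ≤ l)).card = m ∨
      (Tf.filter (fun l => p ≤ l)).card = m+1 ∨
      (Tf.filter (fun l => p ≤ l)).card = 2*m+1 := by
    intro p hp
    rw [hPf, Set.mem_toFinset, Set.mem_setOf_eq] at hp
    have h := h2b π hπpl hπsec p hp.1 hp.2
    rw [hc p] at h
    omega
  set Af := Pf.filter (fun p => (Tf.filter (fun l => p ≤ l)).card = m) with hAf
  set Bf := Pf.filter (fun p => (Tf.filter (fun l => p ≤ l)).card = m+1) with hBf
  set Gf := Pf.filter (fun p => (Tf.filter (fun l => p ≤ l)).card = 2*m+1) with hGf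
  have hdisj1 : Disjoint Af Bf := by
    rw [Finset.disjoint_left]
    intro p h1 h2
    rw [hAf, Finset.mem_filter] at h1
    rw [hBf, Finset.mem_filter] at h2
    omega
  have hdisj2 : Disjoint (Af ∪ Bf) Gf := by
    rw [Finset.disjoint_left]
    intro p h1 h2
    rw [Finset.mem_union, hAf, hBf, Finset.mem_filter, Finset.mem_filter] at h1
    rw [hGf, Finset.mem_filter] at h2
    rcases h1 with h1 | h1 <;> omega
  have hcover : Pf = (Af ∪ Bf) ∪ Gf := by
    ext p
    simp only [Finset.mem_union, hAf, hBf, hGf, Finset.mem_filter]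
    constructor
    · intro hp
      rcases htri p hp with h | h | h
      · exact Or.inl (Or.inl ⟨hp, h⟩)
      · exact Or.inl (Or.inr ⟨hp, h⟩)
      · exact Or.inr ⟨hp, h⟩
    · rintro ((⟨h, -⟩ | ⟨h, -⟩) | ⟨h, -⟩) <;> exact h
  have hsplitsum : ∀ f : ℕ → ℕ, ∑ p ∈ Pf, f ((Tf.filter (fun l => p ≤ l)).card)
      = Af.card * f m + Bf.card * f (m+1) + Gf.card * f (2*m+1) := by
    intro f
    have hA : ∑ p ∈ Af, f ((Tf.filter (fun l => p ≤ l)).card) = Af.card * f m := by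
      have h1 : ∑ p ∈ Af, f ((Tf.filter (fun l => p ≤ l)).card) = ∑ _p ∈ Af, f m :=
        Finset.sum_congr rfl (fun p hp => by
          have hp' := hp; rw [hAf, Finset.mem_filter] at hp'; rw [hp'.2])
      rw [h1, Finset.sum_const, smul_eq_mul]
    have hB : ∑ p ∈ Bf, f ((Tf.filter (fun l => p ≤ l)).card) = Bf.card * f (m+1) := by
      have h1 : ∑ p ∈ Bf, f ((Tf.filter (fun l => p ≤ l)).card) = ∑ _p ∈ Bf, f (m+1) :=
        Finset.sum_congr rfl (fun p hp => by
          have hp' := hp; rw [hBf, Finset.mem_filter] at hp'; rw [hp'.2])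
      rw [h1, Finset.sum_const, smul_eq_mul]
    have hG : ∑ p ∈ Gf, f ((Tf.filter (fun l => p ≤ l)).card) = Gf.card * f (2*m+1) := by
      have h1 : ∑ p ∈ Gf, f ((Tf.filter (fun l => p ≤ l)).card) = ∑ _p ∈ Gf, f (2*m+1) :=
        Finset.sum_congr rfl (fun p hp => by
          have hp' := hp; rw [hGf, Finset.mem_filter] at hp'; rw [hp'.2])
      rw [h1, Finset.sum_const, smul_eq_mul]
    rw [hcover, Finset.sum_union hdisj2, Finset.sum_union hdisj1, hA, hB, hG]
  -- the three equations
  have hPcard : Pf.card = (2*m+1)*(2*m+1) + (2*m+1) + 1 := by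
    have h := aux_pts_plane (2*m+1) hq hq2 π hπ3 (aux_points_count π)
    rw [Set.ncard_eq_toFinset_card'] at h
    rw [hPf, h]
    ring
  have e1 : Af.card + Bf.card + Gf.card = (2*m+1)*(2*m+1) + (2*m+1) + 1 := by
    have h := congrArg Finset.card hcover
    rw [Finset.card_union_of_disjoint hdisj2, Finset.card_union_of_disjoint hdisj1,
      hPcard] at h
    omega
  have e2 : Af.card * m + Bf.card * (m+1) + Gf.card * (2*m+1)
      = (2*m+1)*(m+1) * (2*m+1+1) := by
    have h := hsplitsum (fun x => x)
    beta_reduce at h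
    rw [hsum1, hTcard] at h
    omega
  have e3 : Af.card * (m*m-m) + Bf.card * ((m+1)*(m+1)-(m+1))
      + Gf.card * ((2*m+1)*(2*m+1)-(2*m+1))
      = (2*m+1)*(m+1)*((2*m+1)*(m+1)) - (2*m+1)*(m+1) := by
    have h := hsplitsum (fun x => x*x - x)
    beta_reduce at h
    rw [hsum2, hTcard] at h
    omega
  have key := aux_arith m Af.card Bf.card Gf.card hm1 e1 e2 e3
  -- identify alphaSet and gammaSet
  have hdiv1 : (2*m+1-1)/2 = m := by omega
  have hAeq : (alphaSet K S (2*m+1) π).ncard = Af.card := by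
    rw [Set.ncard_eq_toFinset_card']
    congr 1
    ext p
    simp only [Set.mem_toFinset, Set.mem_setOf_eq, hAf, Finset.mem_filter, hPf,
      Set.mem_toFinset, Set.mem_setOf_eq, hc, hdiv1]
    simp only [alphaSet, Set.mem_setOf_eq, hc, hdiv1]
    tauto
  have hGeq : (gammaSet K S (2*m+1) π).ncard = Gf.card := by
    rw [Set.ncard_eq_toFinset_card']
    congr 1
    ext p
    simp only [Set.mem_toFinset, Set.mem_setOf_eq, hGf, Finset.mem_filter, hPf,
      Set.mem_toFinset, Set.mem_setOf_eq, hc]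
    simp only [gammaSet, Set.mem_setOf_eq, hc]
    tauto
  rw [hGeq] at hk
  rw [hAeq, key, hk]
end

section
/- For every secant plane π, the set γ(π) is an oval in the projective plane π (so |γ(π)| = q+1), and S_π is precisely the set of lines of π meeting γ(π) in exactly two points. -/
open Submodule Set

set_option linter.unusedSectionVars false
set_option maxHeartbeats 1600000

namespace Stmt10Aux

open Submodule Set Module

variable {K : Type} [Field K] [Fintype K]

lemma finite_submodule (V : Type*) [AddCommGroup V] [Module K V] [Finite V] :
    Finite (Submodule K V) :=
  Finite.of_injective (fun W => (W : Set V)) SetLike.coe_injective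

lemma nat_card_subtype_ne {α : Type*} [Finite α] (a : α) :
    Nat.card {x : α // x ≠ a} = Nat.card α - 1 := by
  classical
  haveI : Fintype α := Fintype.ofFinite α
  simp [Nat.card_eq_fintype_card, Fintype.card_subtype_compl (p := fun x => x = a),
    Fintype.card_subtype_eq]

lemma card_rank_one (V : Type*) [AddCommGroup V] [Module K V] [Finite V] :
    Nat.card {U : Submodule K V // Module.finrank K U = 1} * (Fintype.card K - 1)
      = Nat.card V - 1 := by
  classical
  haveI : Fintype V := Fintype.ofFinite V
  haveI : Finite (Submodule K V) := finite_submodule V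
  haveI : FiniteDimensional K V := Module.Finite.of_finite
  set T := {U : Submodule K V // Module.finrank K U = 1} with hT
  haveI : Finite T := Subtype.finite
  haveI : Fintype T := Fintype.ofFinite T
  have hspan : ∀ v : {v : V // v ≠ 0}, Module.finrank K (K ∙ v.1) = 1 :=
    fun v => finrank_span_singleton v.2
  set f : {v : V // v ≠ 0} → T := fun v => ⟨K ∙ v.1, hspan v⟩ with hf
  have hfiber : ∀ U : T, Nat.card {v : {v : V // v ≠ 0} // f v = U}
      = Fintype.card K - 1 := by
    intro U
    have e : {v : {v : V // v ≠ 0} // f v = U} ≃ {w : ↥U.1 // w ≠ 0} := by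
      refine ⟨fun v => ⟨⟨v.1.1, ?_⟩, ?_⟩, fun w => ⟨⟨w.1.1, ?_⟩, ?_⟩, ?_, ?_⟩
      · have : (K ∙ v.1.1) = U.1 := congrArg Subtype.val v.2
        exact this ▸ Submodule.mem_span_singleton_self v.1.1
      · intro h
        exact v.1.2 (by simpa using congrArg Subtype.val h)
      · intro h; exact w.2 (Subtype.ext h)
      · refine Subtype.ext ?_
        show (K ∙ w.1.1) = U.1
        refine Submodule.eq_of_le_of_finrank_eq ?_ ?_
        · simpa [Submodule.span_le] using w.1.2
        · rw [finrank_span_singleton (by intro h; exact w.2 (Subtype.ext h)), U.2]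
      · intro v; rfl
      · intro w; rfl
    rw [Nat.card_congr e]
    rw [nat_card_subtype_ne (0 : ↥U.1)]
    have : Nat.card ↥U.1 = Fintype.card K := by
      haveI : Fintype ↥U.1 := Fintype.ofFinite _
      rw [Nat.card_eq_fintype_card, card_eq_pow_finrank (K := K), U.2, pow_one]
    rw [this]
  have htot : Nat.card {v : V // v ≠ 0} = Nat.card V - 1 := nat_card_subtype_ne (0 : V)
  haveI : Fintype {v : V // v ≠ 0} := Fintype.ofFinite _
  calc Nat.card T * (Fintype.card K - 1)
      = ∑ U : T, Nat.card {v : {v : V // v ≠ 0} // f v = U} := by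
        rw [Finset.sum_congr rfl (fun U _ => hfiber U)]
        simp [Nat.card_eq_fintype_card, Finset.sum_const, mul_comm]
    _ = Nat.card {v : V // v ≠ 0} := by
        haveI : ∀ U : T, Fintype {v : {v : V // v ≠ 0} // f v = U} :=
          fun U => Fintype.ofFinite _
        rw [Nat.card_eq_fintype_card]
        rw [← Fintype.card_congr (Equiv.sigmaFiberEquiv f)]
        rw [Fintype.card_sigma]
        exact Finset.sum_congr rfl fun U _ => by rw [Nat.card_eq_fintype_card]
    _ = Nat.card V - 1 := htot

lemma ncard_points_mul (W : Submodule K (Fin 4 → K)) :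
    {p | p ∈ pgPoint K ∧ p ≤ W}.ncard * (Fintype.card K - 1)
      = Fintype.card K ^ Module.finrank K ↥W - 1 := by
  classical
  have e : {U : Submodule K ↥W // Module.finrank K ↥U = 1}
      ≃ {p : Submodule K (Fin 4 → K) // p ∈ pgPoint K ∧ p ≤ W} := by
    refine ⟨fun U => ⟨U.1.map W.subtype, ?_, ?_⟩, fun p => ⟨p.1.comap W.subtype, ?_⟩,
      ?_, ?_⟩
    · show Module.finrank K _ = 1
      rw [Submodule.finrank_map_subtype_eq]; exact U.2
    · exact Submodule.map_subtype_le W U.1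
    · have h1 : (p.1.comap W.subtype).map W.subtype = p.1 :=
        Submodule.map_comap_subtype W p.1 ▸ by rw [inf_eq_right.2 p.2.2]
      have := Submodule.finrank_map_subtype_eq W (p.1.comap W.subtype)
      rw [h1] at this
      rw [← this]; exact p.2.1
    · intro U
      refine Subtype.ext ?_
      simp [Submodule.comap_map_eq_of_injective W.injective_subtype]
    · intro p
      refine Subtype.ext ?_
      show (p.1.comap W.subtype).map W.subtype = p.1
      rw [Submodule.map_comap_subtype, inf_eq_right.2 p.2.2]
  have h := card_rank_one (K := K) ↥W
  rw [Nat.card_congr e] at h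
  rw [show Nat.card {p : Submodule K (Fin 4 → K) // p ∈ pgPoint K ∧ p ≤ W}
      = {p | p ∈ pgPoint K ∧ p ≤ W}.ncard from Nat.card_coe_set_eq _] at h
  have hcard : Nat.card ↥W = Fintype.card K ^ Module.finrank K ↥W := by
    haveI : Fintype ↥W := Fintype.ofFinite _
    rw [Nat.card_eq_fintype_card, card_eq_pow_finrank (K := K)]
  rw [hcard] at h
  exact h

lemma sub_one_cancel {N a q : ℕ} (hq : 2 ≤ q) (h : N * (q - 1) = a * (q - 1)) : N = a :=
  Nat.eq_of_mul_eq_mul_right (by omega) h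

lemma ncard_points_line {l : Submodule K (Fin 4 → K)} (hl : l ∈ pgLine K) :
    {p | p ∈ pgPoint K ∧ p ≤ l}.ncard = Fintype.card K + 1 := by
  have h := ncard_points_mul l
  rw [show Module.finrank K ↥l = 2 from hl] at h
  set q := Fintype.card K
  have hq : 2 ≤ q := Fintype.one_lt_card
  refine sub_one_cancel hq (h.trans ?_)
  have : q ^ 2 = (q + 1) * (q - 1) + 1 := by
    obtain ⟨r, hr⟩ : ∃ r, q = r + 2 := ⟨q - 2, by omega⟩
    rw [hr, show r + 2 - 1 = r + 1 from rfl]; ring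
  omega

lemma ncard_points_plane {π : Submodule K (Fin 4 → K)} (hπ : π ∈ pgPlane K) :
    {p | p ∈ pgPoint K ∧ p ≤ π}.ncard = Fintype.card K ^ 2 + Fintype.card K + 1 := by
  have h := ncard_points_mul π
  rw [show Module.finrank K ↥π = 3 from hπ] at h
  set q := Fintype.card K
  have hq : 2 ≤ q := Fintype.one_lt_card
  refine sub_one_cancel hq (h.trans ?_)
  have : q ^ 3 = (q ^ 2 + q + 1) * (q - 1) + 1 := by
    obtain ⟨r, hr⟩ : ∃ r, q = r + 2 := ⟨q - 2, by omega⟩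
    rw [hr, show r + 2 - 1 = r + 1 from rfl]; ring
  omega

lemma lines_meet {π l l' : Submodule K (Fin 4 → K)} (hπ : π ∈ pgPlane K)
    (hl : l ∈ pgLine K) (hl' : l' ∈ pgLine K) (hlπ : l ≤ π) (hl'π : l' ≤ π)
    (hne : l ≠ l') :
    {p | p ∈ pgPoint K ∧ p ≤ l ∧ p ≤ l'} = {l ⊓ l'} := by
  have hrl : Module.finrank K ↥l = 2 := hl
  have hrl' : Module.finrank K ↥l' = 2 := hl'
  have hsup_le : Module.finrank K ↥(l ⊔ l') ≤ 3 := by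
    have := Submodule.finrank_mono (sup_le hlπ hl'π)
    rw [show Module.finrank K ↥π = 3 from hπ] at this
    exact this
  have hdim := Submodule.finrank_sup_add_finrank_inf_eq l l'
  rw [hrl, hrl'] at hdim
  have hinf_le : Module.finrank K ↥(l ⊓ l') ≤ 2 := by
    have := Submodule.finrank_mono (inf_le_left : l ⊓ l' ≤ l)
    rw [hrl] at this; exact this
  have hinf_ne : Module.finrank K ↥(l ⊓ l') ≠ 2 := by
    intro h2
    have h3 : l ⊓ l' = l := Submodule.eq_of_le_of_finrank_eq inf_le_left (h2.trans hrl.symm)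
    have h4 : l ⊓ l' = l' := Submodule.eq_of_le_of_finrank_eq inf_le_right (h2.trans hrl'.symm)
    exact hne (h3 ▸ h4)
  have hinf : Module.finrank K ↥(l ⊓ l') = 1 := by omega
  ext p
  simp only [Set.mem_setOf_eq, Set.mem_singleton_iff]
  constructor
  · rintro ⟨hp, h1, h2⟩
    exact Submodule.eq_of_le_of_finrank_eq (le_inf h1 h2)
      ((show Module.finrank K ↥p = 1 from hp).trans hinf.symm)
  · rintro rfl
    exact ⟨hinf, inf_le_left, inf_le_right⟩

lemma ncard_eq_filter_card {β : Type*} (B : Set β) (hB : B.Finite) (p : β → Prop)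
    [DecidablePred p] :
    {b | b ∈ B ∧ p b}.ncard = (hB.toFinset.filter p).card := by
  rw [← Set.ncard_coe_finset]
  congr 1
  ext b
  simp [Set.Finite.mem_toFinset]

lemma double_count {α β : Type*} (A : Set α) (B : Set β) (hA : A.Finite) (hB : B.Finite)
    (R : α → β → Prop) :
    ∑ a ∈ hA.toFinset, {b | b ∈ B ∧ R a b}.ncard
      = ∑ b ∈ hB.toFinset, {a | a ∈ A ∧ R a b}.ncard := by
  classical
  calc ∑ a ∈ hA.toFinset, {b | b ∈ B ∧ R a b}.ncard
      = ∑ a ∈ hA.toFinset, ∑ b ∈ hB.toFinset, (if R a b then 1 else 0) := by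
        refine Finset.sum_congr rfl fun a _ => ?_
        rw [ncard_eq_filter_card B hB, Finset.card_filter]
    _ = ∑ b ∈ hB.toFinset, ∑ a ∈ hA.toFinset, (if R a b then 1 else 0) := Finset.sum_comm
    _ = ∑ b ∈ hB.toFinset, {a | a ∈ A ∧ R a b}.ncard := by
        refine Finset.sum_congr rfl fun b _ => ?_
        rw [ncard_eq_filter_card A hA, Finset.card_filter]

lemma sum_split3 {ι : Type*} (s : Finset ι) (d : ι → ℕ) {u v w : ℕ}
    (huv : u ≠ v) (huw : u ≠ w) (hvw : v ≠ w)
    (h3 : ∀ p ∈ s, d p = u ∨ d p = v ∨ d p = w) (f : ι → ℕ) :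
    ∑ p ∈ s, f p = ∑ p ∈ s.filter (fun p => d p = u), f p
      + ∑ p ∈ s.filter (fun p => d p = v), f p
      + ∑ p ∈ s.filter (fun p => d p = w), f p := by
  rw [← Finset.sum_filter_add_sum_filter_not s (fun p => d p = u) f]
  have h1 : (s.filter (fun p => ¬ d p = u)).filter (fun p => d p = v)
      = s.filter (fun p => d p = v) := by
    ext p; simp only [Finset.mem_filter]
    constructor
    · rintro ⟨⟨hs, _⟩, hv⟩; exact ⟨hs, hv⟩
    · rintro ⟨hs, hv⟩; exact ⟨⟨hs, fun hu => huv (hu ▸ hv ▸ rfl)⟩, hv⟩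
  have h2 : (s.filter (fun p => ¬ d p = u)).filter (fun p => ¬ d p = v)
      = s.filter (fun p => d p = w) := by
    ext p; simp only [Finset.mem_filter]
    constructor
    · rintro ⟨⟨hs, hu⟩, hv⟩
      rcases h3 p hs with h | h | h
      · exact absurd h hu
      · exact absurd h hv
      · exact ⟨hs, h⟩
    · rintro ⟨hs, hw⟩
      exact ⟨⟨hs, fun hu => huw (hu ▸ hw ▸ rfl)⟩, fun hv => hvw (hv ▸ hw ▸ rfl)⟩
  rw [← Finset.sum_filter_add_sum_filter_not (s.filter (fun p => ¬ d p = u))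
    (fun p => d p = v) f, h1, h2, add_assoc]

lemma sum_filter_val {ι : Type*} (s : Finset ι) (d : ι → ℕ) (v : ℕ) (f : ℕ → ℕ) :
    ∑ p ∈ s.filter (fun p => d p = v), f (d p)
      = (s.filter (fun p => d p = v)).card * f v := by
  rw [Finset.sum_congr rfl (fun p hp => by
    rw [(Finset.mem_filter.1 hp).2]), Finset.sum_const, smul_eq_mul]

lemma mul_pred (k : ℕ) : k * k - k = k * (k - 1) := by
  rcases k with _ | k
  · simp
  · rw [Nat.succ_sub_one, Nat.mul_succ, Nat.add_sub_cancel]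

lemma all_eq_two {ι : Type*} (s : Finset ι) (f : ι → ℕ) (hle : ∀ i ∈ s, f i ≤ 2)
    (hsum : ∑ i ∈ s, f i = 2 * s.card) : ∀ i ∈ s, f i = 2 := by
  intro i hi
  by_contra hne
  have hlt : f i < 2 := lt_of_le_of_ne (hle i hi) hne
  have : ∑ j ∈ s, f j < ∑ j ∈ s, 2 :=
    Finset.sum_lt_sum hle ⟨i, hi, hlt⟩
  rw [Finset.sum_const, smul_eq_mul, mul_comm] at this
  omega


lemma arith_bound2 {bl cl m : ℤ} (h : bl + cl * (m + 1) = m + 1 + (2 * m + 1))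
    (hb : 0 ≤ bl) (hc : 3 ≤ cl) (hm : 1 ≤ m) : False := by nlinarith

lemma arith_bound1 {bl cl m : ℤ} (h : bl + cl * (m + 1) = m + 1)
    (hb : 0 ≤ bl) (hc : 2 ≤ cl) (hm : 1 ≤ m) : False := by nlinarith

open scoped Classical in
lemma main_secant (q : ℕ) (hq : Fintype.card K = q) (hq_odd : Odd q)
    (S : Set (Submodule K (Fin 4 → K))) (hS : S ⊆ pgLine K) (h2b : P2b K S q)
    (π : Submodule K (Fin 4 → K)) (hsec : IsSecant K S q π) :
    ((gammaSet K S q π).Nonempty ∧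
      (∀ l ∈ pgLine K, l ≤ π → {p | p ∈ gammaSet K S q π ∧ p ≤ l}.ncard ≤ 2) ∧
      (gammaSet K S q π).ncard = q + 1) ∧
    (∀ l, (l ∈ S ∧ l ≤ π) ↔
      (l ∈ pgLine K ∧ l ≤ π ∧ {p | p ∈ gammaSet K S q π ∧ p ≤ l}.ncard = 2)) := by
  haveI : Finite (Submodule K (Fin 4 → K)) := finite_submodule _
  obtain ⟨hπp, hπn⟩ := hsec
  have hq2 : 2 ≤ q := hq ▸ Fintype.one_lt_card
  obtain ⟨m, hm⟩ := hq_odd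
  have hm' : q = 2 * m + 1 := by omega
  have hm1 : 1 ≤ m := by omega
  subst hm'
  set d : Submodule K (Fin 4 → K) → ℕ := fun p => (pencilS K S p π).ncard with hd
  set P : Set (Submodule K (Fin 4 → K)) := {p | p ∈ pgPoint K ∧ p ≤ π} with hP
  set SP : Set (Submodule K (Fin 4 → K)) := linesIn K S π with hSP
  have hPfin : P.Finite := Set.toFinite _
  have hSPfin : SP.Finite := Set.toFinite _
  set n : ℕ := (2 * m + 1) * ((2 * m + 1) + 1) / 2 with hn
  have hqq : (2 * m + 1) * ((2 * m + 1) + 1) = 2 * ((2 * m + 1) * (m + 1)) := by ring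
  have hnm : n = (2 * m + 1) * (m + 1) := by omega
  have hFScard : hSPfin.toFinset.card = n := by
    rw [← Set.ncard_eq_toFinset_card _ hSPfin]; exact hπn
  have hn1 : 0 < n := by rw [hnm]; positivity
  have hSPmem : ∀ l, l ∈ SP ↔ l ∈ S ∧ l ≤ π := fun l => Iff.rfl
  have pmem : ∀ p l', l' ∈ pencilS K S p π ↔ (l' ∈ SP ∧ p ≤ l') := by
    intro p l'
    simp only [pencilS, linesIn, hSP, Set.mem_setOf_eq]
    tauto
  have pencil_eq : ∀ p, {l' | l' ∈ SP ∧ p ≤ l'} = pencilS K S p π := by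
    intro p; ext l'; rw [pmem]; rfl
  have hd3 : ∀ p ∈ P, d p = m ∨ d p = m + 1 ∨ d p = 2 * m + 1 := by
    intro p hp
    rcases h2b π hπp hπn p hp.1 hp.2 with h | h | h
    · left; show (pencilS K S p π).ncard = m; omega
    · right; left; show (pencilS K S p π).ncard = m + 1; omega
    · right; right; exact h
  -- Eq2 : global incidence count
  have e2 : ∑ p ∈ hPfin.toFinset, d p = n * (2 * m + 1 + 1) := by
    have hdc := double_count P SP hPfin hSPfin (fun p l => p ≤ l)
    have hL : ∑ p ∈ hPfin.toFinset, {l' | l' ∈ SP ∧ p ≤ l'}.ncard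
        = ∑ p ∈ hPfin.toFinset, d p :=
      Finset.sum_congr rfl fun p _ => by rw [pencil_eq p]
    have hR : ∑ l ∈ hSPfin.toFinset, {a | a ∈ P ∧ a ≤ l}.ncard
        = ∑ l ∈ hSPfin.toFinset, (2 * m + 1 + 1) := by
      refine Finset.sum_congr rfl fun l hl => ?_
      rw [Set.Finite.mem_toFinset] at hl
      have hll : l ∈ pgLine K := hS hl.1
      have hset : {a | a ∈ P ∧ a ≤ l} = {p | p ∈ pgPoint K ∧ p ≤ l} := by
        ext a
        simp only [Set.mem_setOf_eq, hP]
        exact ⟨fun ⟨⟨h1, _⟩, h3⟩ => ⟨h1, h3⟩,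
          fun ⟨h1, h3⟩ => ⟨⟨h1, h3.trans hl.2⟩, h3⟩⟩
      rw [hset, ncard_points_line hll, hq]
    rw [hL, hR, Finset.sum_const, smul_eq_mul, hFScard] at hdc
    exact hdc
  -- Eq3 : pair count
  have e3 : ∑ p ∈ hPfin.toFinset, d p * (d p - 1) = n * n - n := by
    set B2 : Set (Submodule K (Fin 4 → K) × Submodule K (Fin 4 → K)) :=
      {x | x.1 ∈ SP ∧ x.2 ∈ SP ∧ x.1 ≠ x.2} with hB2
    have hB2fin : B2.Finite := Set.toFinite _
    have hFB2 : hB2fin.toFinset = hSPfin.toFinset.offDiag := by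
      ext x
      simp only [Set.Finite.mem_toFinset, Finset.mem_offDiag, hB2, Set.mem_setOf_eq]
    have hdc := double_count P B2 hPfin hB2fin (fun p x => p ≤ x.1 ∧ p ≤ x.2)
    have hL : ∑ p ∈ hPfin.toFinset, {x | x ∈ B2 ∧ p ≤ x.1 ∧ p ≤ x.2}.ncard
        = ∑ p ∈ hPfin.toFinset, d p * (d p - 1) := by
      refine Finset.sum_congr rfl fun p _ => ?_
      have hpenfin : (pencilS K S p π).Finite := Set.toFinite _
      have hset : {x | x ∈ B2 ∧ p ≤ x.1 ∧ p ≤ x.2}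
          = ↑(hpenfin.toFinset.offDiag) := by
        ext x
        simp only [Set.mem_setOf_eq, hB2, Finset.mem_coe, Finset.mem_offDiag,
          Set.Finite.mem_toFinset, pmem]
        tauto
      rw [hset, Set.ncard_coe_finset, Finset.offDiag_card, ← mul_pred]
      have hcardpen : hpenfin.toFinset.card = d p := by
        rw [← Set.ncard_eq_toFinset_card _ hpenfin]
      rw [hcardpen]
    have hR : ∑ x ∈ hB2fin.toFinset, {a | a ∈ P ∧ a ≤ x.1 ∧ a ≤ x.2}.ncard
        = n * n - n := by
      have hone : ∀ x ∈ hB2fin.toFinset, {a | a ∈ P ∧ a ≤ x.1 ∧ a ≤ x.2}.ncard = 1 := by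
        intro x hx
        rw [Set.Finite.mem_toFinset] at hx
        obtain ⟨hx1, hx2, hx12⟩ := hx
        have hset : {a | a ∈ P ∧ a ≤ x.1 ∧ a ≤ x.2}
            = {p | p ∈ pgPoint K ∧ p ≤ x.1 ∧ p ≤ x.2} := by
          ext a
          simp only [Set.mem_setOf_eq, hP]
          exact ⟨fun ⟨⟨h1, _⟩, h3⟩ => ⟨h1, h3⟩,
            fun ⟨h1, h3, h4⟩ => ⟨⟨h1, h3.trans hx1.2⟩, h3, h4⟩⟩
        rw [hset, lines_meet hπp (hS hx1.1) (hS hx2.1) hx1.2 hx2.2 hx12,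
          Set.ncard_singleton]
      rw [Finset.sum_congr rfl hone, Finset.sum_const, smul_eq_mul, mul_one, hFB2,
        Finset.offDiag_card, hFScard]
    rw [hL, hR] at hdc
    exact hdc
  -- Eq1 : number of points in the plane
  have e1card : hPfin.toFinset.card = (2 * m + 1) ^ 2 + (2 * m + 1) + 1 := by
    rw [← Set.ncard_eq_toFinset_card _ hPfin, hP, ncard_points_plane hπp, hq]
  have hd3' : ∀ p ∈ hPfin.toFinset, d p = m ∨ d p = m + 1 ∨ d p = 2 * m + 1 :=
    fun p hp => hd3 p (hPfin.mem_toFinset.1 hp)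
  have hmne1 : m ≠ m + 1 := by omega
  have hmne2 : m ≠ 2 * m + 1 := by omega
  have hmne3 : m + 1 ≠ 2 * m + 1 := by omega
  have E1 : (hPfin.toFinset.filter (fun p => d p = m)).card
      + (hPfin.toFinset.filter (fun p => d p = m + 1)).card
      + (hPfin.toFinset.filter (fun p => d p = 2 * m + 1)).card
      = (2 * m + 1) ^ 2 + (2 * m + 1) + 1 := by
    have hsplit := sum_split3 hPfin.toFinset d hmne1 hmne2 hmne3 hd3' (fun _ => 1)
    simp only [Finset.sum_const, smul_eq_mul, mul_one] at hsplit
    rw [e1card] at hsplit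
    exact hsplit.symm
  have E2 : (hPfin.toFinset.filter (fun p => d p = m)).card * m
      + (hPfin.toFinset.filter (fun p => d p = m + 1)).card * (m + 1)
      + (hPfin.toFinset.filter (fun p => d p = 2 * m + 1)).card * (2 * m + 1)
      = n * (2 * m + 1 + 1) := by
    have hsplit := sum_split3 hPfin.toFinset d hmne1 hmne2 hmne3 hd3' d
    rw [e2] at hsplit
    have h1 := sum_filter_val hPfin.toFinset d m id
    have h2 := sum_filter_val hPfin.toFinset d (m + 1) id
    have h3 := sum_filter_val hPfin.toFinset d (2 * m + 1) id
    simp only [id_eq] at h1 h2 h3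
    rw [h1, h2, h3] at hsplit
    exact hsplit.symm
  have E3 : (hPfin.toFinset.filter (fun p => d p = m)).card * (m * (m - 1))
      + (hPfin.toFinset.filter (fun p => d p = m + 1)).card * ((m + 1) * (m + 1 - 1))
      + (hPfin.toFinset.filter (fun p => d p = 2 * m + 1)).card
          * ((2 * m + 1) * (2 * m + 1 - 1))
      = n * n - n := by
    have hsplit := sum_split3 hPfin.toFinset d hmne1 hmne2 hmne3 hd3'
      (fun p => d p * (d p - 1))
    rw [e3] at hsplit
    have h1 := sum_filter_val hPfin.toFinset d m (fun k => k * (k - 1))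
    have h2 := sum_filter_val hPfin.toFinset d (m + 1) (fun k => k * (k - 1))
    have h3 := sum_filter_val hPfin.toFinset d (2 * m + 1) (fun k => k * (k - 1))
    rw [h1, h2, h3] at hsplit
    exact hsplit.symm
  -- solve the linear system over ℤ
  have hcq : (hPfin.toFinset.filter (fun p => d p = 2 * m + 1)).card = 2 * m + 1 + 1 := by
    set a := (hPfin.toFinset.filter (fun p => d p = m)).card with ha
    set b := (hPfin.toFinset.filter (fun p => d p = m + 1)).card with hb
    set c := (hPfin.toFinset.filter (fun p => d p = 2 * m + 1)).card with hc
    have hnn : n ≤ n * n := Nat.le_mul_of_pos_left n hn1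
    rw [show m + 1 - 1 = m from by omega, show 2 * m + 1 - 1 = 2 * m from by omega] at E3
    have z1 : (a : ℤ) + b + c = (2 * (m : ℤ) + 1) ^ 2 + (2 * m + 1) + 1 := by
      exact_mod_cast E1
    have z2 : (a : ℤ) * m + b * (m + 1) + c * (2 * m + 1)
        = ((2 * (m : ℤ) + 1) * (m + 1)) * (2 * m + 1 + 1) := by
      rw [hnm] at E2
      exact_mod_cast E2
    have hnz : (n : ℤ) = (2 * (m : ℤ) + 1) * ((m : ℤ) + 1) := by exact_mod_cast hnm
    have z3 : (a : ℤ) * (m * ((m : ℤ) - 1)) + b * ((m + 1) * m) + c * ((2 * m + 1) * (2 * m))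
        = ((2 * (m : ℤ) + 1) * (m + 1)) * ((2 * (m : ℤ) + 1) * (m + 1)) - (2 * m + 1) * (m + 1) := by
      have hE := E3
      zify [hm1, hnn] at hE
      rw [hnz] at hE
      push_cast at hE ⊢
      linarith [hE]
    have key : (c : ℤ) * ((m : ℤ) * (m + 1)) = 2 * m * ((m : ℤ) + 1) ^ 2 := by
      linear_combination z3 + ((m : ℤ) ^ 2 + m) * z1 - 2 * (m : ℤ) * z2
    have hmz : ((m : ℤ)) * (m + 1) ≠ 0 := by positivity
    have hkey2 : (c : ℤ) * ((m : ℤ) * (m + 1)) = (2 * (m : ℤ) + 2) * ((m : ℤ) * (m + 1)) := by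
      rw [key]; ring
    have hcz : (c : ℤ) = 2 * m + 2 := mul_right_cancel₀ hmz hkey2
    have : c = 2 * m + 2 := by exact_mod_cast hcz
    omega
  -- gamma set cardinality
  have hγset : gammaSet K S (2 * m + 1) π
      = ↑(hPfin.toFinset.filter (fun p => d p = 2 * m + 1)) := by
    ext p
    simp only [gammaSet, Set.mem_setOf_eq, Finset.coe_filter, Set.Finite.mem_toFinset, hP]
    tauto
  have hγcard : (gammaSet K S (2 * m + 1) π).ncard = 2 * m + 1 + 1 := by
    rw [hγset, Set.ncard_coe_finset]; exact hcq
  have hγfin : (gammaSet K S (2 * m + 1) π).Finite := Set.toFinite _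
  -- per-line analysis
  have line_bound : ∀ l ∈ pgLine K, l ≤ π →
      ((l ∈ S → {p | p ∈ gammaSet K S (2 * m + 1) π ∧ p ≤ l}.ncard ≤ 2) ∧
       (l ∉ S → {p | p ∈ gammaSet K S (2 * m + 1) π ∧ p ≤ l}.ncard ≤ 1)) := by
    intro l hll hlπ
    set Pl : Set (Submodule K (Fin 4 → K)) := {p | p ∈ pgPoint K ∧ p ≤ l} with hPl
    have hPlfin : Pl.Finite := Set.toFinite _
    have hplsum : ∑ p ∈ hPlfin.toFinset, d p
        = n + (if l ∈ S then 2 * m + 1 else 0) := by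
      have hdc := double_count Pl SP hPlfin hSPfin (fun p l' => p ≤ l')
      have hL : ∑ p ∈ hPlfin.toFinset, {l' | l' ∈ SP ∧ p ≤ l'}.ncard
          = ∑ p ∈ hPlfin.toFinset, d p :=
        Finset.sum_congr rfl fun p _ => by rw [pencil_eq p]
      rw [hL] at hdc
      have hterm : ∀ l' ∈ hSPfin.toFinset, l' ≠ l → {a | a ∈ Pl ∧ a ≤ l'}.ncard = 1 := by
        intro l' hl' hne
        rw [Set.Finite.mem_toFinset] at hl'
        have hset : {a | a ∈ Pl ∧ a ≤ l'} = {p | p ∈ pgPoint K ∧ p ≤ l ∧ p ≤ l'} := by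
          ext a; simp only [Set.mem_setOf_eq, hPl]; tauto
        rw [hset, lines_meet hπp hll (hS hl'.1) hlπ hl'.2 (fun h => hne h.symm),
          Set.ncard_singleton]
      by_cases hlS : l ∈ S
      · have hlSP : l ∈ hSPfin.toFinset := by
          rw [Set.Finite.mem_toFinset]; exact ⟨hlS, hlπ⟩
        have hsplit : {a | a ∈ Pl ∧ a ≤ l}.ncard
            + ∑ l' ∈ hSPfin.toFinset.erase l, {a | a ∈ Pl ∧ a ≤ l'}.ncard
            = ∑ l' ∈ hSPfin.toFinset, {a | a ∈ Pl ∧ a ≤ l'}.ncard :=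
          Finset.add_sum_erase _ (fun l' => {a | a ∈ Pl ∧ a ≤ l'}.ncard) hlSP
        have hself : {a | a ∈ Pl ∧ a ≤ l}.ncard = 2 * m + 1 + 1 := by
          have hPlself : {a | a ∈ Pl ∧ a ≤ l} = Pl := by
            ext a; simp only [Set.mem_setOf_eq, hPl]; tauto
          rw [hPlself, hPl, ncard_points_line hll, hq]
        have herase : ∑ l' ∈ hSPfin.toFinset.erase l, {a | a ∈ Pl ∧ a ≤ l'}.ncard
            = n - 1 := by
          rw [Finset.sum_congr rfl (fun l' hl' =>
            hterm l' (Finset.mem_of_mem_erase hl') (Finset.ne_of_mem_erase hl'))]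
          rw [Finset.sum_const, smul_eq_mul, mul_one, Finset.card_erase_of_mem hlSP,
            hFScard]
        rw [hdc, ← hsplit, hself, herase, if_pos hlS]
        omega
      · have hall : ∀ l' ∈ hSPfin.toFinset, {a | a ∈ Pl ∧ a ≤ l'}.ncard = 1 := by
          intro l' hl'
          refine hterm l' hl' fun h => hlS ?_
          rw [Set.Finite.mem_toFinset] at hl'
          exact h ▸ hl'.1
        rw [hdc, Finset.sum_congr rfl hall, Finset.sum_const, smul_eq_mul, mul_one,
          hFScard, if_neg hlS]
        omega
    have hd3l : ∀ p ∈ hPlfin.toFinset, d p = m ∨ d p = m + 1 ∨ d p = 2 * m + 1 := by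
      intro p hp
      rw [Set.Finite.mem_toFinset] at hp
      exact hd3 p ⟨hp.1, hp.2.trans hlπ⟩
    have E1l : (hPlfin.toFinset.filter (fun p => d p = m)).card
        + (hPlfin.toFinset.filter (fun p => d p = m + 1)).card
        + (hPlfin.toFinset.filter (fun p => d p = 2 * m + 1)).card = 2 * m + 1 + 1 := by
      have hsplit := sum_split3 hPlfin.toFinset d hmne1 hmne2 hmne3 hd3l (fun _ => 1)
      simp only [Finset.sum_const, smul_eq_mul, mul_one] at hsplit
      have hcardl : hPlfin.toFinset.card = 2 * m + 1 + 1 := by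
        rw [← Set.ncard_eq_toFinset_card _ hPlfin, hPl, ncard_points_line hll, hq]
      rw [hcardl] at hsplit
      exact hsplit.symm
    have E2l : (hPlfin.toFinset.filter (fun p => d p = m)).card * m
        + (hPlfin.toFinset.filter (fun p => d p = m + 1)).card * (m + 1)
        + (hPlfin.toFinset.filter (fun p => d p = 2 * m + 1)).card * (2 * m + 1)
        = n + (if l ∈ S then 2 * m + 1 else 0) := by
      have hsplit := sum_split3 hPlfin.toFinset d hmne1 hmne2 hmne3 hd3l d
      rw [hplsum] at hsplit
      have h1 := sum_filter_val hPlfin.toFinset d m id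
      have h2 := sum_filter_val hPlfin.toFinset d (m + 1) id
      have h3 := sum_filter_val hPlfin.toFinset d (2 * m + 1) id
      simp only [id_eq] at h1 h2 h3
      rw [h1, h2, h3] at hsplit
      exact hsplit.symm
    have hγl : {p | p ∈ gammaSet K S (2 * m + 1) π ∧ p ≤ l}.ncard
        = (hPlfin.toFinset.filter (fun p => d p = 2 * m + 1)).card := by
      have hseteq : {p | p ∈ gammaSet K S (2 * m + 1) π ∧ p ≤ l}
          = {p | p ∈ Pl ∧ d p = 2 * m + 1} := by
        ext p
        simp only [gammaSet, Set.mem_setOf_eq, hPl]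
        constructor
        · rintro ⟨⟨h1, h2, h3⟩, h4⟩; exact ⟨⟨h1, h4⟩, h3⟩
        · rintro ⟨⟨h1, h4⟩, h3⟩; exact ⟨⟨h1, h4.trans hlπ, h3⟩, h4⟩
      rw [hseteq, ncard_eq_filter_card Pl hPlfin (fun p => d p = 2 * m + 1)]
    set al := (hPlfin.toFinset.filter (fun p => d p = m)).card with hal
    set bl := (hPlfin.toFinset.filter (fun p => d p = m + 1)).card with hbl
    set cl := (hPlfin.toFinset.filter (fun p => d p = 2 * m + 1)).card with hcl
    constructor
    · intro hlS
      rw [hγl]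
      by_contra hgt
      push_neg at hgt
      have h3cl : 3 ≤ cl := hgt
      rw [if_pos hlS] at E2l
      rw [hnm] at E2l
      have z1l : (al : ℤ) + bl + cl = 2 * m + 1 + 1 := by exact_mod_cast E1l
      have z2l : (al : ℤ) * m + bl * (m + 1) + cl * (2 * m + 1)
          = (2 * (m : ℤ) + 1) * (m + 1) + (2 * m + 1) := by exact_mod_cast E2l
      have keyl : (bl : ℤ) + cl * ((m : ℤ) + 1) = (m : ℤ) + 1 + (2 * m + 1) := by
        linear_combination z2l - (m : ℤ) * z1l
      have hblz : (0 : ℤ) ≤ bl := Int.ofNat_nonneg bl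
      have hclz : (3 : ℤ) ≤ cl := by exact_mod_cast h3cl
      have hmz : (1 : ℤ) ≤ m := by exact_mod_cast hm1
      exact arith_bound2 keyl hblz hclz hmz
    · intro hlS
      rw [hγl]
      by_contra hgt
      push_neg at hgt
      have h2cl : 2 ≤ cl := hgt
      rw [if_neg hlS, Nat.add_zero] at E2l
      rw [hnm] at E2l
      have z1l : (al : ℤ) + bl + cl = 2 * m + 1 + 1 := by exact_mod_cast E1l
      have z2l : (al : ℤ) * m + bl * (m + 1) + cl * (2 * m + 1)
          = (2 * (m : ℤ) + 1) * (m + 1) := by exact_mod_cast E2l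
      have keyl : (bl : ℤ) + cl * ((m : ℤ) + 1) = (m : ℤ) + 1 := by
        linear_combination z2l - (m : ℤ) * z1l
      have hblz : (0 : ℤ) ≤ bl := Int.ofNat_nonneg bl
      have hclz : (2 : ℤ) ≤ cl := by exact_mod_cast h2cl
      have hmz : (1 : ℤ) ≤ m := by exact_mod_cast hm1
      exact arith_bound1 keyl hblz hclz hmz
  -- every line of S meets gamma in exactly two points
  have hsumS : ∑ l ∈ hSPfin.toFinset,
      {p | p ∈ gammaSet K S (2 * m + 1) π ∧ p ≤ l}.ncard = 2 * hSPfin.toFinset.card := by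
    have hdc := double_count (gammaSet K S (2 * m + 1) π) SP hγfin hSPfin
      (fun p l' => p ≤ l')
    have hL : ∑ p ∈ hγfin.toFinset, {l' | l' ∈ SP ∧ p ≤ l'}.ncard
        = (2 * m + 1 + 1) * (2 * m + 1) := by
      have hterm : ∀ p ∈ hγfin.toFinset, {l' | l' ∈ SP ∧ p ≤ l'}.ncard = 2 * m + 1 := by
        intro p hp
        rw [Set.Finite.mem_toFinset] at hp
        rw [pencil_eq p]
        exact hp.2.2
      rw [Finset.sum_congr rfl hterm, Finset.sum_const, smul_eq_mul]
      congr 1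
      rw [← Set.ncard_eq_toFinset_card _ hγfin, hγcard]
    rw [hL] at hdc
    rw [← hdc, hFScard]
    have : (2 * m + 1 + 1) * (2 * m + 1) = 2 * ((2 * m + 1) * (m + 1)) := by ring
    rw [this, hnm]
  have hall2 : ∀ l ∈ hSPfin.toFinset,
      {p | p ∈ gammaSet K S (2 * m + 1) π ∧ p ≤ l}.ncard = 2 := by
    refine all_eq_two _ _ (fun l hl => ?_) hsumS
    rw [Set.Finite.mem_toFinset] at hl
    exact (line_bound l (hS hl.1) hl.2).1 hl.1
  -- assemble
  refine ⟨⟨?_, ?_, hγcard⟩, ?_⟩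
  · exact Set.nonempty_of_ncard_ne_zero (by rw [hγcard]; omega)
  · intro l hll hlπ
    by_cases hlS : l ∈ S
    · exact (line_bound l hll hlπ).1 hlS
    · exact le_trans ((line_bound l hll hlπ).2 hlS) (by omega)
  · intro l
    constructor
    · rintro ⟨hlS, hlπ⟩
      have hl : l ∈ hSPfin.toFinset := by
        rw [Set.Finite.mem_toFinset]; exact ⟨hlS, hlπ⟩
      exact ⟨hS hlS, hlπ, hall2 l hl⟩
    · rintro ⟨hll, hlπ, h2⟩
      refine ⟨?_, hlπ⟩
      by_contra hlS
      have := (line_bound l hll hlπ).2 hlS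
      omega

end Stmt10Aux

/-- For every secant plane `π`, the set `γ(π)` is an oval in `π`
(an arc of size `q+1`), and `S_π` is precisely the set of lines of `π` meeting
`γ(π)` in exactly two points. -/
theorem stmt_10 (K : Type) [Field K] [Fintype K] (q : ℕ) (hq : Fintype.card K = q)
    (hq_odd : Odd q) (S : Set (Submodule K (Fin 4 → K))) (hS : S ⊆ pgLine K)
    (h1 : P1 K S q) (h2 : P2 K S q) (h2a : P2a K S q) (h2b : P2b K S q) :
    ∀ π, IsSecant K S q π →
      ((gammaSet K S q π).Nonempty ∧
        (∀ l ∈ pgLine K, l ≤ π →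
          {p | p ∈ gammaSet K S q π ∧ p ≤ l}.ncard ≤ 2) ∧
        (gammaSet K S q π).ncard = q + 1) ∧
      (∀ l, (l ∈ S ∧ l ≤ π) ↔
        (l ∈ pgLine K ∧ l ≤ π ∧
          {p | p ∈ gammaSet K S q π ∧ p ≤ l}.ncard = 2)) := by
  intro π hsec
  exact Stmt10Aux.main_secant q hq hq_odd S hS h2b π hsec
end

section
/- If π is a secant plane, then every black point contained in π belongs to the set γ(π). -/
open Submodule Set

open Submodule Set Module

section Helpers

variable {K : Type*} [Field K] [Fintype K] {V : Type*} [AddCommGroup V] [Module K V]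
  [FiniteDimensional K V]

instance fin_submodule : Finite (Submodule K V) := by
  have : Finite V := Finite.of_equiv _ (Module.finBasis K V).equivFun.toEquiv.symm
  exact Finite.of_injective (fun W : Submodule K V => (W : Set V)) SetLike.coe_injective

lemma ncard_eq_sum_fibers {X Y : Type*} (A : Set X) (B : Set Y) (f : X → Y)
    (hA : A.Finite) (hB : B.Finite) (hf : ∀ a ∈ A, f a ∈ B) :
    A.ncard = ∑ b ∈ hB.toFinset, {a | a ∈ A ∧ f a = b}.ncard := by
  classical
  rw [Set.ncard_eq_toFinset_card A hA]
  rw [Finset.card_eq_sum_card_fiberwise (t := hB.toFinset) (f := f)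
    (by intro x hx; simp only [Finset.mem_coe, Set.Finite.mem_toFinset] at hx ⊢; exact hf x hx)]
  refine Finset.sum_congr rfl fun b _ => ?_
  have : {a | a ∈ A ∧ f a = b} = ↑(hA.toFinset.filter (fun a => f a = b)) := by
    ext a; simp [Set.Finite.mem_toFinset]
  rw [this, Set.ncard_coe_finset]

lemma ncard_fiber_const {X Y : Type*} (A : Set X) (B : Set Y) (f : X → Y)
    (hA : A.Finite) (hB : B.Finite) (hf : ∀ a ∈ A, f a ∈ B) (k : ℕ)
    (hk : ∀ b ∈ B, {a | a ∈ A ∧ f a = b}.ncard = k) :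
    A.ncard = B.ncard * k := by
  rw [ncard_eq_sum_fibers A B f hA hB hf]
  rw [Finset.sum_congr rfl (fun b hb => hk b (hB.mem_toFinset.mp hb))]
  simp [Finset.sum_const, Set.ncard_eq_toFinset_card B hB, mul_comm]

lemma ncard_fiber_fst {X Y : Type*} (A : Set (X × Y)) (x : X) :
    {a | a ∈ A ∧ a.1 = x}.ncard = {y | (x, y) ∈ A}.ncard := by
  have h : {a | a ∈ A ∧ a.1 = x} = (fun y => (x, y)) '' {y | (x, y) ∈ A} := by
    ext ⟨u, v⟩
    constructor
    · rintro ⟨hm, rfl⟩; exact ⟨v, hm, rfl⟩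
    · rintro ⟨y, hy, h⟩; cases h; exact ⟨hy, rfl⟩
  rw [h, Set.ncard_image_of_injective _ (fun a b h => by simpa using h)]

lemma ncard_fiber_snd {X Y : Type*} (A : Set (X × Y)) (y : Y) :
    {a | a ∈ A ∧ a.2 = y}.ncard = {x | (x, y) ∈ A}.ncard := by
  have h : {a | a ∈ A ∧ a.2 = y} = (fun x => (x, y)) '' {x | (x, y) ∈ A} := by
    ext ⟨u, v⟩
    constructor
    · rintro ⟨hm, rfl⟩; exact ⟨u, hm, rfl⟩
    · rintro ⟨x, hx, h⟩; cases h; exact ⟨hx, rfl⟩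
  rw [h, Set.ncard_image_of_injective _ (fun a b h => by simpa using h)]

lemma finrank_map_mkQ_add (x W : Submodule K V) (h : x ≤ W) :
    finrank K ↥(W.map x.mkQ) + finrank K ↥x = finrank K ↥W := by
  have hrn := LinearMap.finrank_range_add_finrank_ker (x.mkQ.domRestrict W)
  have hker : LinearMap.ker (x.mkQ.domRestrict W) = Submodule.comap W.subtype x := by
    rw [LinearMap.domRestrict, LinearMap.ker_comp, Submodule.ker_mkQ]
  have hrange : LinearMap.range (x.mkQ.domRestrict W) = W.map x.mkQ := by
    rw [LinearMap.range_domRestrict]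
  rw [hker, hrange] at hrn
  rw [(Submodule.comapSubtypeEquivOfLe h).finrank_eq] at hrn
  exact hrn

set_option linter.unusedSectionVars false

lemma ncard_between (x y : Submodule K V) (hxy : x ≤ y) (r : ℕ) :
    {W : Submodule K V | x ≤ W ∧ W ≤ y ∧ finrank K ↥W = finrank K ↥x + r}.ncard
      = {U : Submodule K (V ⧸ x) | U ≤ y.map x.mkQ ∧ finrank K ↥U = r}.ncard := by
  have hinj : Function.Injective (fun U : Submodule K (V ⧸ x) => U.comap x.mkQ) := by
    intro U U' h
    have := congrArg (fun W : Submodule K V => W.map x.mkQ) h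
    simpa [Submodule.map_comap_eq_of_surjective (Submodule.mkQ_surjective x)] using this
  have hset : {W : Submodule K V | x ≤ W ∧ W ≤ y ∧ finrank K ↥W = finrank K ↥x + r}
      = (fun U : Submodule K (V ⧸ x) => U.comap x.mkQ) ''
        {U : Submodule K (V ⧸ x) | U ≤ y.map x.mkQ ∧ finrank K ↥U = r} := by
    ext W
    constructor
    · rintro ⟨hxW, hWy, hrk⟩
      refine ⟨W.map x.mkQ, ⟨Submodule.map_mono hWy, ?_⟩, ?_⟩
      · have := finrank_map_mkQ_add x W hxW
        omega
      · show (W.map x.mkQ).comap x.mkQ = W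
        rw [Submodule.comap_map_eq, Submodule.ker_mkQ, sup_eq_left.mpr hxW]
    · rintro ⟨U, ⟨hUy, hUr⟩, rfl⟩
      have hx : x ≤ U.comap x.mkQ := by
        intro v hv
        simp only [Submodule.mem_comap, Submodule.mkQ_apply]
        rw [(Submodule.Quotient.mk_eq_zero x).mpr hv]
        exact U.zero_mem
      have hmap : (U.comap x.mkQ).map x.mkQ = U :=
        Submodule.map_comap_eq_of_surjective (Submodule.mkQ_surjective x) U
      have hfr : finrank K ↥(U.comap x.mkQ) = finrank K ↥x + r := by
        have h2 := finrank_map_mkQ_add x (U.comap x.mkQ) hx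
        rw [hmap, hUr] at h2
        omega
      refine ⟨hx, ?_, hfr⟩
      intro v hv
      simp only [Submodule.mem_comap] at hv
      rcases Submodule.mem_map.mp (hUy hv) with ⟨w, hw, hww⟩
      have hsub : w - v ∈ x := by
        rw [← Submodule.Quotient.mk_eq_zero x]
        have : x.mkQ (w - v) = 0 := by
          rw [map_sub]
          simp only [Submodule.mkQ_apply] at hww ⊢
          rw [hww, sub_self]
        simpa using this
      have : w - (w - v) ∈ y := y.sub_mem hw (hxy hsub)
      simpa using this
  rw [hset, Set.ncard_image_of_injective _ hinj]

lemma ncard_below (y : Submodule K V) (r : ℕ) :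
    {W : Submodule K V | W ≤ y ∧ finrank K ↥W = r}.ncard
      = {U : Submodule K ↥y | finrank K ↥U = r}.ncard := by
  have hinj : Function.Injective (fun U : Submodule K ↥y => U.map y.subtype) :=
    Submodule.map_injective_of_injective y.injective_subtype
  have hset : {W : Submodule K V | W ≤ y ∧ finrank K ↥W = r}
      = (fun U : Submodule K ↥y => U.map y.subtype) '' {U : Submodule K ↥y | finrank K ↥U = r} := by
    ext W
    constructor
    · rintro ⟨hWy, hrk⟩
      have hmc : (W.comap y.subtype).map y.subtype = W := by
        rw [Submodule.map_comap_subtype, inf_eq_right.mpr hWy]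
      refine ⟨W.comap y.subtype, ?_, hmc⟩
      show finrank K ↥(W.comap y.subtype) = r
      rw [(Submodule.equivSubtypeMap y (W.comap y.subtype)).finrank_eq, hmc, hrk]
    · rintro ⟨U, hU, rfl⟩
      exact ⟨Submodule.map_subtype_le y U, by
        rw [← (Submodule.equivSubtypeMap y U).finrank_eq]; exact hU⟩
  rw [hset, Set.ncard_image_of_injective _ hinj]

lemma ncard_rank_one_mul (n : ℕ) (hV : finrank K V = n) :
    {W : Submodule K V | finrank K ↥W = 1}.ncard * (Fintype.card K - 1)
      = Fintype.card K ^ n - 1 := by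
  classical
  have hfinV : Finite V := Finite.of_equiv _ (Module.finBasis K V).equivFun.toEquiv.symm
  have hcardV : Nat.card V = Fintype.card K ^ n := by
    haveI : Fintype V := Fintype.ofFinite V
    rw [Nat.card_eq_fintype_card, card_eq_pow_finrank (K := K) (V := V), hV]
  have hA : {v : V | v ≠ 0}.ncard = Fintype.card K ^ n - 1 := by
    have : {v : V | v ≠ 0} = (Set.univ : Set V) \ {0} := by ext v; simp
    rw [this, Set.ncard_diff (by simp) (Set.toFinite _), Set.ncard_univ, Set.ncard_singleton,
      hcardV]
  have key := ncard_fiber_const {v : V | v ≠ 0} {W : Submodule K V | finrank K ↥W = 1}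
    (fun v => Submodule.span K {v}) (Set.toFinite _) (Set.toFinite _)
    (fun v hv => finrank_span_singleton hv) (Fintype.card K - 1) ?_
  · rw [← key, hA]
  · intro b hb
    have hbset : {a | a ∈ {v : V | v ≠ 0} ∧ Submodule.span K {a} = b} = (b : Set V) \ {0} := by
      ext v
      simp only [Set.mem_setOf_eq, Set.mem_diff, SetLike.mem_coe, Set.mem_singleton_iff]
      constructor
      · rintro ⟨hv0, rfl⟩
        exact ⟨Submodule.mem_span_singleton_self v, hv0⟩
      · rintro ⟨hvb, hv0⟩
        refine ⟨hv0, ?_⟩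
        have hle : Submodule.span K {v} ≤ b := by
          rw [Submodule.span_le]; simpa using hvb
        exact Submodule.eq_of_le_of_finrank_le hle
          (by rw [hb, finrank_span_singleton hv0])
    rw [hbset]
    have hcb : Nat.card ↥b = Fintype.card K := by
      haveI : Finite ↥b := by
        have : Finite V := hfinV
        infer_instance
      haveI : Fintype ↥b := Fintype.ofFinite ↥b
      rw [Nat.card_eq_fintype_card, card_eq_pow_finrank (K := K) (V := ↥b), hb, pow_one]
    have : (b : Set V).ncard = Fintype.card K := by
      rw [← Nat.card_coe_set_eq, ← hcb]
      exact Nat.card_congr (Equiv.setCongr rfl)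
    rw [Set.ncard_diff (by simp [b.zero_mem]) (Set.toFinite _), this, Set.ncard_singleton]

lemma ncard_rank_one_of_two (hV : finrank K V = 2) :
    {W : Submodule K V | finrank K ↥W = 1}.ncard = Fintype.card K + 1 := by
  have h := ncard_rank_one_mul 2 hV
  have hq : 2 ≤ Fintype.card K := Fintype.one_lt_card
  set q := Fintype.card K with hqdef
  have h1 : 1 ≤ q := by omega
  have h2 : 1 ≤ q ^ 2 := Nat.one_le_pow _ _ (by omega)
  have hfac : (q + 1) * (q - 1) = q ^ 2 - 1 := by zify [h1, h2]; ring
  rw [← hfac] at h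
  exact Nat.eq_of_mul_eq_mul_right (by omega) h

lemma ncard_rank_one_of_three (hV : finrank K V = 3) :
    {W : Submodule K V | finrank K ↥W = 1}.ncard
      = Fintype.card K ^ 2 + Fintype.card K + 1 := by
  have h := ncard_rank_one_mul 3 hV
  have hq : 2 ≤ Fintype.card K := Fintype.one_lt_card
  set q := Fintype.card K with hqdef
  have h1 : 1 ≤ q := by omega
  have h3 : 1 ≤ q ^ 3 := Nat.one_le_pow _ _ (by omega)
  have hfac : (q ^ 2 + q + 1) * (q - 1) = q ^ 3 - 1 := by zify [h1, h3]; ring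
  rw [← hfac] at h
  exact Nat.eq_of_mul_eq_mul_right (by omega) h

lemma ncard_oneUp (x y : Submodule K V) (hxy : x ≤ y)
    (h2 : finrank K ↥y = finrank K ↥x + 2) :
    {W : Submodule K V | x ≤ W ∧ W ≤ y ∧ finrank K ↥W = finrank K ↥x + 1}.ncard
      = Fintype.card K + 1 := by
  rw [ncard_between x y hxy 1]
  have hy' : finrank K ↥(y.map x.mkQ) = 2 := by
    have := finrank_map_mkQ_add x y hxy; omega
  rw [ncard_below (y.map x.mkQ) 1]
  exact ncard_rank_one_of_two hy'

lemma ncard_up (x : Submodule K V) (r : ℕ) :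
    {W : Submodule K V | x ≤ W ∧ finrank K ↥W = finrank K ↥x + r}.ncard
      = {U : Submodule K (V ⧸ x) | finrank K ↥U = r}.ncard := by
  have h1 : {W : Submodule K V | x ≤ W ∧ finrank K ↥W = finrank K ↥x + r}
      = {W : Submodule K V | x ≤ W ∧ W ≤ ⊤ ∧ finrank K ↥W = finrank K ↥x + r} := by
    ext W; simp
  have h2 : {U : Submodule K (V ⧸ x) | U ≤ (⊤ : Submodule K V).map x.mkQ ∧ finrank K ↥U = r}
      = {U : Submodule K (V ⧸ x) | finrank K ↥U = r} := by
    ext U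
    simp [Submodule.map_top, Submodule.range_mkQ]
  rw [h1, ncard_between x ⊤ le_top r, h2]

lemma ncard_cover (x : Submodule K V) (hquot : finrank K V = finrank K ↥x + 2) :
    {W : Submodule K V | x ≤ W ∧ finrank K ↥W = finrank K ↥x + 1}.ncard
      = Fintype.card K + 1 := by
  rw [ncard_up x 1]
  refine ncard_rank_one_of_two ?_
  have := Submodule.finrank_quotient_add_finrank x
  omega

lemma ncard_cover3 (x : Submodule K V) (hquot : finrank K V = finrank K ↥x + 3) :
    {W : Submodule K V | x ≤ W ∧ finrank K ↥W = finrank K ↥x + 1}.ncard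
      = Fintype.card K ^ 2 + Fintype.card K + 1 := by
  rw [ncard_up x 1]
  refine ncard_rank_one_of_three ?_
  have := Submodule.finrank_quotient_add_finrank x
  omega

lemma ncard_rank_two_of_three (hV : finrank K V = 3) :
    {W : Submodule K V | finrank K ↥W = 2}.ncard
      = Fintype.card K ^ 2 + Fintype.card K + 1 := by
  classical
  set q := Fintype.card K with hqdef
  set A : Set (Submodule K V × Submodule K V) :=
    {a | (finrank K ↥a.1 = 1 ∧ finrank K ↥a.2 = 2) ∧ a.1 ≤ a.2} with hA
  set B1 : Set (Submodule K V) := {W | finrank K ↥W = 1} with hB1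
  set B2 : Set (Submodule K V) := {W | finrank K ↥W = 2} with hB2
  have count2 : A.ncard = B2.ncard * (q + 1) := by
    refine ncard_fiber_const A B2 Prod.snd (Set.toFinite _) (Set.toFinite _)
      (fun a ha => ha.1.2) (q + 1) ?_
    intro b hb
    rw [ncard_fiber_snd A b]
    have : {x | (x, b) ∈ A} = {L : Submodule K V | L ≤ b ∧ finrank K ↥L = 1} := by
      ext L
      simp only [hA, Set.mem_setOf_eq]
      exact ⟨fun h => ⟨h.2, h.1.1⟩, fun h => ⟨⟨h.2, hb⟩, h.1⟩⟩
    rw [this, ncard_below b 1]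
    exact ncard_rank_one_of_two hb
  have count1 : A.ncard = B1.ncard * (q + 1) := by
    refine ncard_fiber_const A B1 Prod.fst (Set.toFinite _) (Set.toFinite _)
      (fun a ha => ha.1.1) (q + 1) ?_
    intro b hb
    rw [ncard_fiber_fst A b]
    have : {y | (b, y) ∈ A} = {W : Submodule K V | b ≤ W ∧ finrank K ↥W = finrank K ↥b + 1} := by
      ext W
      simp only [hA, Set.mem_setOf_eq, hb]
      constructor
      · rintro ⟨⟨_, h2⟩, hle⟩; rw [hb]; exact ⟨hle, h2⟩
      · rintro ⟨hle, h2⟩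
        rw [hb] at h2
        exact ⟨⟨hb, h2⟩, hle⟩
    rw [this]
    exact ncard_cover b (by rw [hb, hV])
  have hB1c : B1.ncard = q ^ 2 + q + 1 := ncard_rank_one_of_three hV
  have : B2.ncard * (q + 1) = (q ^ 2 + q + 1) * (q + 1) := by
    rw [← count2, count1, hB1c]
  exact Nat.eq_of_mul_eq_mul_right (by omega) this

end Helpers

/-- If `π` is a secant plane, then every black point contained in
`π` belongs to `γ(π)`. -/
theorem stmt_12 (K : Type) [Field K] [Fintype K] (q : ℕ) (hq : Fintype.card K = q)
    (hq_odd : Odd q) (S : Set (Submodule K (Fin 4 → K))) (hS : S ⊆ pgLine K)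
    (h1 : P1 K S q) (h2 : P2 K S q) (h2a : P2a K S q) (h2b : P2b K S q) :
    ∀ π, IsSecant K S q π → ∀ p, IsBlack K S q p → p ≤ π →
      p ∈ gammaSet K S q π := by
  classical
  subst hq
  intro π hπ p hp hpπ
  obtain ⟨hπpl, hπcnt⟩ := hπ
  obtain ⟨hppt, hpcnt⟩ := hp
  set q := Fintype.card K with hqdef
  have hq2 : 2 ≤ q := Fintype.one_lt_card
  have hq3 : 3 ≤ q := by obtain ⟨k, hk⟩ := hq_odd; omega
  have hV4 : finrank K (Fin 4 → K) = 4 := Module.finrank_fin_fun K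
  have hp1 : finrank K ↥p = 1 := hppt
  have hπ3 : finrank K ↥π = 3 := hπpl
  refine ⟨hppt, hpπ, ?_⟩
  by_contra hne
  set m := (pencilS K S p π).ncard with hmdef
  have hm3 : m = (q - 1) / 2 ∨ m = (q + 1) / 2 ∨ m = q :=
    h2b π hπpl hπcnt p hppt hpπ
  have hmlt : m < q := by rcases hm3 with h | h | h <;> omega
  have hm1 : 1 ≤ m := by rcases hm3 with h | h | h <;> omega
  -- basic counting sets
  have planes_thru : ∀ ℓ : Submodule K (Fin 4 → K), finrank K ↥ℓ = 2 →
      {τ : Submodule K (Fin 4 → K) | τ ∈ pgPlane K ∧ ℓ ≤ τ}.ncard = q + 1 := by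
    intro ℓ hℓ2
    have h := ncard_cover ℓ (by rw [hℓ2, hV4])
    rw [hℓ2] at h
    rw [← h]
    congr 1
    ext τ
    simp only [Set.mem_setOf_eq, pgPlane]
    constructor
    · rintro ⟨h3, hle⟩; exact ⟨hle, by omega⟩
    · rintro ⟨hle, h3⟩; exact ⟨by omega, hle⟩
  -- the set of all planes through p
  set T : Set (Submodule K (Fin 4 → K)) := {τ | τ ∈ pgPlane K ∧ p ≤ τ} with hTdef
  have hT : T.ncard = q ^ 2 + q + 1 := by
    have h := ncard_up p 2
    have heq : T = {W : Submodule K (Fin 4 → K) | p ≤ W ∧ finrank K ↥W = finrank K ↥p + 2} := by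
      ext τ
      simp only [hTdef, Set.mem_setOf_eq, pgPlane, hp1]
      constructor
      · rintro ⟨h3, hle⟩; exact ⟨hle, by omega⟩
      · rintro ⟨hle, h3⟩; exact ⟨by omega, hle⟩
    rw [heq, h]
    refine ncard_rank_two_of_three ?_
    have := Submodule.finrank_quotient_add_finrank p
    omega
  -- all lines through p
  set LA : Set (Submodule K (Fin 4 → K)) := {W | p ≤ W ∧ finrank K ↥W = 2} with hLAdef
  have hLA : LA.ncard = q ^ 2 + q + 1 := by
    have h := ncard_cover3 p (by rw [hp1, hV4])
    rw [hp1] at h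
    exact h
  -- lines through p inside π
  set Lpi : Set (Submodule K (Fin 4 → K)) := {W | p ≤ W ∧ W ≤ π ∧ finrank K ↥W = 2}
    with hLpidef
  have hLpi : Lpi.ncard = q + 1 := by
    have h := ncard_oneUp p π hpπ (by rw [hp1, hπ3])
    rw [hp1] at h
    exact h
  -- every pencil at p has at most q lines
  have pencil_le : ∀ τ, τ ∈ pgPlane K → p ≤ τ → (pencilS K S p τ).ncard ≤ q := by
    intro τ hτpl hpτ
    rcases h2 τ hτpl with hs | ht
    · rcases h2b τ hτpl hs p hppt hpτ with h | h | h <;> omega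
    · rcases h2a τ hτpl ht p hppt hpτ with h | h <;> omega
  -- double count D
  set AP : Set (Submodule K (Fin 4 → K) × Submodule K (Fin 4 → K)) :=
    {a | (a.1 ∈ S ∧ p ≤ a.1) ∧ (a.1 ≤ a.2 ∧ a.2 ∈ pgPlane K)} with hAPdef
  have hD1 : AP.ncard = ∑ τ ∈ (Set.toFinite T).toFinset, (pencilS K S p τ).ncard := by
    rw [ncard_eq_sum_fibers AP T Prod.snd (Set.toFinite _) (Set.toFinite _)
      (fun a ha => ⟨ha.2.2, le_trans ha.1.2 ha.2.1⟩)]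
    refine Finset.sum_congr rfl fun τ hτ => ?_
    rw [ncard_fiber_snd AP τ]
    congr 1
    ext l
    have hτT : τ ∈ T := (Set.Finite.mem_toFinset _).mp hτ
    simp only [hAPdef, Set.mem_setOf_eq, pencilS]
    exact ⟨fun h => ⟨h.1.1, h.1.2, h.2.1⟩, fun h => ⟨⟨h.1, h.2.1⟩, h.2.2, hτT.1⟩⟩
  have hD2 : AP.ncard = q ^ 2 * (q + 1) := by
    have h := ncard_fiber_const AP (linesThru K S p) Prod.fst (Set.toFinite _) (Set.toFinite _)
      (fun a ha => ha.1) (q + 1) ?_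
    · rw [h, hpcnt]
    · intro l hl
      rw [ncard_fiber_fst AP l]
      have heq : {y | (l, y) ∈ AP} = {τ | τ ∈ pgPlane K ∧ l ≤ τ} := by
        ext τ
        simp only [hAPdef, Set.mem_setOf_eq]
        exact ⟨fun h => ⟨h.2.2, h.2.1⟩, fun h => ⟨hl, h.2, h.1⟩⟩
      rw [heq]
      exact planes_thru l (hS hl.1)
  -- double count E
  have stepE : ∀ ℓ : Submodule K (Fin 4 → K), finrank K ↥ℓ = 2 → p ≤ ℓ → ℓ ∉ S →
      ∑ τ ∈ (Set.toFinite {τ : Submodule K (Fin 4 → K) | τ ∈ pgPlane K ∧ ℓ ≤ τ}).toFinset,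
        (pencilS K S p τ).ncard = q ^ 2 := by
    intro ℓ hℓ2 hpℓ hℓS
    set Pl : Set (Submodule K (Fin 4 → K)) := {τ | τ ∈ pgPlane K ∧ ℓ ≤ τ} with hPldef
    set AE : Set (Submodule K (Fin 4 → K) × Submodule K (Fin 4 → K)) :=
      {a | (a.1 ∈ S ∧ p ≤ a.1) ∧ (a.1 ≤ a.2 ∧ a.2 ∈ Pl)} with hAEdef
    have hE1 : AE.ncard = ∑ τ ∈ (Set.toFinite Pl).toFinset, (pencilS K S p τ).ncard := by
      rw [ncard_eq_sum_fibers AE Pl Prod.snd (Set.toFinite _) (Set.toFinite _)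
        (fun a ha => ha.2.2)]
      refine Finset.sum_congr rfl fun τ hτ => ?_
      rw [ncard_fiber_snd AE τ]
      congr 1
      ext l
      have hτT : τ ∈ Pl := (Set.Finite.mem_toFinset _).mp hτ
      simp only [hAEdef, Set.mem_setOf_eq, pencilS]
      exact ⟨fun h => ⟨h.1.1, h.1.2, h.2.1⟩, fun h => ⟨⟨h.1, h.2.1⟩, h.2.2, hτT⟩⟩
    have hE2 : AE.ncard = q ^ 2 := by
      have h := ncard_fiber_const AE (linesThru K S p) Prod.fst (Set.toFinite _)
        (Set.toFinite _) (fun a ha => ha.1) 1 ?_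
      · rw [h, hpcnt, mul_one]
      · intro l hl
        rw [ncard_fiber_fst AE l]
        have hl2 : finrank K ↥l = 2 := hS hl.1
        have hne : ℓ ≠ l := fun h => hℓS (h ▸ hl.1)
        have hinf2 : finrank K ↥(ℓ ⊓ l) ≠ 2 := by
          intro h
          apply hne
          have h1 : ℓ ⊓ l = ℓ := Submodule.eq_of_le_of_finrank_le inf_le_left (by omega)
          have h2' : ℓ ⊓ l = l := Submodule.eq_of_le_of_finrank_le inf_le_right (by omega)
          rw [← h1, h2']
        have hinf_le : finrank K ↥(ℓ ⊓ l) ≤ 2 := hℓ2 ▸ Submodule.finrank_mono inf_le_left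
        have hinf_ge : 1 ≤ finrank K ↥(ℓ ⊓ l) := by
          have := Submodule.finrank_mono (le_inf hpℓ hl.2)
          omega
        have hsup : finrank K ↥(ℓ ⊔ l) = 3 := by
          have := Submodule.finrank_sup_add_finrank_inf_eq ℓ l
          omega
        have heq : {y | (l, y) ∈ AE} = {ℓ ⊔ l} := by
          ext τ
          simp only [hAEdef, hPldef, Set.mem_setOf_eq, Set.mem_singleton_iff, pgPlane]
          constructor
          · rintro ⟨-, hlτ, hτ3, hℓτ⟩
            exact (Submodule.eq_of_le_of_finrank_le (sup_le hℓτ hlτ) (by omega)).symm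
          · rintro rfl
            exact ⟨hl, le_sup_right, hsup, le_sup_left⟩
        rw [heq, Set.ncard_singleton]
    rw [← hE1, hE2]
  -- every line through p not in S is contained in π
  have key : ∀ ℓ : Submodule K (Fin 4 → K), finrank K ↥ℓ = 2 → p ≤ ℓ → ℓ ∉ S → ℓ ≤ π := by
    intro ℓ hℓ2 hpℓ hℓS
    set Pl : Set (Submodule K (Fin 4 → K)) := {τ | τ ∈ pgPlane K ∧ ℓ ≤ τ} with hPldef
    set tT := (Set.toFinite T).toFinset with htTdef
    set tL := (Set.toFinite Pl).toFinset with htLdef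
    have hsub : tL ⊆ tT := by
      intro τ hτ
      rw [htLdef, Set.Finite.mem_toFinset] at hτ
      rw [htTdef, Set.Finite.mem_toFinset]
      exact ⟨hτ.1, le_trans hpℓ hτ.2⟩
    have hsumT : ∑ τ ∈ tT, (pencilS K S p τ).ncard = q ^ 2 * (q + 1) := by
      rw [← hD1, hD2]
    have hsumL : ∑ τ ∈ tL, (pencilS K S p τ).ncard = q ^ 2 := stepE ℓ hℓ2 hpℓ hℓS
    have hcardT : tT.card = q ^ 2 + q + 1 := by
      rw [htTdef, ← Set.ncard_eq_toFinset_card]; exact hT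
    have hcardL : tL.card = q + 1 := by
      rw [htLdef, ← Set.ncard_eq_toFinset_card]; exact planes_thru ℓ hℓ2
    have hsdiff : ∑ τ ∈ tT \ tL, (pencilS K S p τ).ncard = q ^ 2 * q := by
      have h := Finset.sum_sdiff (f := fun τ => (pencilS K S p τ).ncard) hsub
      beta_reduce at h
      rw [hsumL, hsumT] at h
      have hring : q ^ 2 * (q + 1) = q ^ 2 * q + q ^ 2 := by ring
      omega
    have hall : ∀ τ ∈ tT \ tL, (pencilS K S p τ).ncard = q := by
      by_contra h'
      push_neg at h'
      obtain ⟨τ0, hτ0, hne0⟩ := h'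
      have hτ0T : τ0 ∈ T := by
        have := Finset.mem_sdiff.mp hτ0
        exact (Set.Finite.mem_toFinset _).mp this.1
      have hlt : (pencilS K S p τ0).ncard < q :=
        lt_of_le_of_ne (pencil_le τ0 hτ0T.1 hτ0T.2) hne0
      have hstrict : ∑ τ ∈ tT \ tL, (pencilS K S p τ).ncard < ∑ _τ ∈ tT \ tL, q := by
        refine Finset.sum_lt_sum (fun τ hτ => ?_) ⟨τ0, hτ0, hlt⟩
        have hτT : τ ∈ T := by
          have := Finset.mem_sdiff.mp hτ
          exact (Set.Finite.mem_toFinset _).mp this.1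
        exact pencil_le τ hτT.1 hτT.2
      rw [Finset.sum_const, smul_eq_mul, Finset.card_sdiff_of_subset hsub, hcardT, hcardL] at hstrict
      have : q ^ 2 + q + 1 - (q + 1) = q ^ 2 := by omega
      rw [this] at hstrict
      omega
    have hπtT : π ∈ tT := by
      rw [htTdef, Set.Finite.mem_toFinset]
      exact ⟨hπpl, hpπ⟩
    have hπtL : π ∈ tL := by
      by_contra hπnot
      have : π ∈ tT \ tL := Finset.mem_sdiff.mpr ⟨hπtT, hπnot⟩
      exact hmlt.ne (hall π this)
    rw [htLdef, Set.Finite.mem_toFinset] at hπtL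
    exact hπtL.2
  -- the non-S lines through p
  set NS : Set (Submodule K (Fin 4 → K)) := LA \ linesThru K S p with hNSdef
  have hNScard : NS.ncard = q + 1 := by
    have hsub' : linesThru K S p ⊆ LA := fun l hl => ⟨hl.2, hS hl.1⟩
    rw [hNSdef, Set.ncard_diff hsub' (Set.toFinite _), hLA, hpcnt]
    omega
  have hNSsub : NS ⊆ Lpi := by
    rintro ℓ ⟨⟨hpℓ, hℓ2⟩, hℓnot⟩
    have hℓS : ℓ ∉ S := fun h => hℓnot ⟨h, hpℓ⟩
    exact ⟨hpℓ, key ℓ hℓ2 hpℓ hℓS, hℓ2⟩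
  have hpen_sub : pencilS K S p π ⊆ Lpi := by
    intro l hl
    obtain ⟨hlS, hpl, hlπ⟩ : l ∈ S ∧ p ≤ l ∧ l ≤ π := hl
    exact ⟨hpl, hlπ, hS hlS⟩
  have hdisj : Disjoint NS (pencilS K S p π) := by
    rw [Set.disjoint_left]
    rintro l ⟨⟨hpl, -⟩, hlnot⟩ hl2
    obtain ⟨hlS, -, -⟩ : l ∈ S ∧ p ≤ l ∧ l ≤ π := hl2
    exact hlnot ⟨hlS, hpl⟩
  have hunion : (NS ∪ pencilS K S p π).ncard = (q + 1) + m := by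
    rw [Set.ncard_union_eq hdisj (Set.toFinite _) (Set.toFinite _), hNScard]
  have hle : (NS ∪ pencilS K S p π).ncard ≤ Lpi.ncard :=
    Set.ncard_le_ncard (Set.union_subset hNSsub hpen_sub) (Set.toFinite _)
  rw [hunion, hLpi] at hle
  omega
end

section
/- Let π be a secant plane and let x be a black point contained in π. Then there are exactly q lines of π through x which belong to S. -/
open Submodule Set

set_option linter.unusedSectionVars false
set_option maxHeartbeats 1000000

section Aux

open Module Finset
open scoped Classical

variable {K : Type} [Field K] [Fintype K]

local notation "V" => (Fin 4 → K)

instance : Finite (Submodule K (Fin 4 → K)) :=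
  Finite.of_injective (fun W => (W : Set (Fin 4 → K))) SetLike.coe_injective

noncomputable instance : Fintype (Submodule K (Fin 4 → K)) := Fintype.ofFinite _

lemma card_sub' (W : Submodule K (Fin 4 → K)) :
    (W : Set V).ncard = Fintype.card K ^ finrank K W := by
  rw [← Nat.card_coe_set_eq, Nat.card_eq_fintype_card]
  exact Module.card_eq_pow_finrank

lemma card_diff_sub' {U W : Submodule K (Fin 4 → K)} (h : U ≤ W) :
    ((W : Set V) \ (U : Set V)).ncard
      = Fintype.card K ^ finrank K W - Fintype.card K ^ finrank K U := by
  rw [Set.ncard_diff h, card_sub', card_sub']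

lemma finrank_sup_span' {U : Submodule K (Fin 4 → K)} {v : V} (hv : v ∉ U) :
    finrank K ↥(U ⊔ K ∙ v) = finrank K U + 1 := by
  have h0 : v ≠ 0 := by rintro rfl; exact hv U.zero_mem
  have hinf : U ⊓ (K ∙ v) = ⊥ := by
    rw [eq_bot_iff]
    rintro w ⟨hw1, hw2⟩
    rcases Submodule.mem_span_singleton.1 hw2 with ⟨c, rfl⟩
    rcases eq_or_ne c 0 with rfl | hc
    · simp
    · have : c⁻¹ • c • v ∈ U := U.smul_mem c⁻¹ hw1
      rw [smul_smul, inv_mul_cancel₀ hc, one_smul] at this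
      exact absurd this hv
  have := Submodule.finrank_sup_add_finrank_inf_eq U (K ∙ v)
  rw [hinf, finrank_span_singleton h0] at this
  simpa using this

lemma fiber_count' {α β : Type*} [DecidableEq β] {s : Finset α} {t : Finset β}
    {f : α → β} {c : ℕ} (H : ∀ a ∈ s, f a ∈ t)
    (hc : ∀ b ∈ t, (s.filter fun a => f a = b).card = c) :
    s.card = t.card * c := by
  rw [Finset.card_eq_sum_card_fiberwise H]
  rw [Finset.sum_congr rfl hc, Finset.sum_const, smul_eq_mul]

lemma count_between' {U W : Submodule K (Fin 4 → K)} (hUW : U ≤ W) (d : ℕ)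
    (hU : finrank K U = d) :
    {Y : Submodule K (Fin 4 → K) | finrank K Y = d + 1 ∧ U ≤ Y ∧ Y ≤ W}.ncard *
      (Fintype.card K ^ (d+1) - Fintype.card K ^ d)
      = Fintype.card K ^ finrank K W - Fintype.card K ^ d := by
  set A := {Y : Submodule K (Fin 4 → K) | finrank K Y = d + 1 ∧ U ≤ Y ∧ Y ≤ W} with hA
  set s : Finset V := ((W : Set V) \ (U : Set V)).toFinset with hs
  set t : Finset (Submodule K (Fin 4 → K)) := A.toFinset with ht
  have H : ∀ v ∈ s, (U ⊔ K ∙ v) ∈ t := by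
    intro v hv
    rw [hs, Set.mem_toFinset] at hv
    rw [ht, Set.mem_toFinset]
    refine ⟨by rw [finrank_sup_span' hv.2, hU], le_sup_left, ?_⟩
    exact sup_le hUW ((Submodule.span_singleton_le_iff_mem v W).2 hv.1)
  have hc : ∀ Y ∈ t, (s.filter fun v => (U ⊔ (K ∙ v)) = Y).card
      = Fintype.card K ^ (d+1) - Fintype.card K ^ d := by
    intro Y hY
    rw [ht, Set.mem_toFinset] at hY
    obtain ⟨hY1, hY2, hY3⟩ := hY
    have hfe : (s.filter fun v => (U ⊔ (K ∙ v)) = Y) = ((Y : Set V) \ (U : Set V)).toFinset := by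
      ext v
      simp only [Finset.mem_filter, hs, Set.mem_toFinset, Set.mem_diff, SetLike.mem_coe]
      constructor
      · rintro ⟨⟨_, hvU⟩, hspan⟩
        exact ⟨hspan ▸ le_sup_right (α := Submodule K V) (Submodule.mem_span_singleton_self v), hvU⟩
      · rintro ⟨hvY, hvU⟩
        refine ⟨⟨hY3 hvY, hvU⟩, ?_⟩
        apply Submodule.eq_of_le_of_finrank_eq
        · exact sup_le hY2 ((Submodule.span_singleton_le_iff_mem v Y).2 hvY)
        · rw [finrank_sup_span' hvU, hU, hY1]
    rw [hfe, ← Set.ncard_eq_toFinset_card', card_diff_sub' hY2, hY1, hU]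
  have := fiber_count' H hc
  rw [hs, ← Set.ncard_eq_toFinset_card', card_diff_sub' hUW, hU] at this
  rw [this, ht, ← Set.ncard_eq_toFinset_card']

lemma count_lines_in_plane' {x π : Submodule K (Fin 4 → K)} (hx : finrank K x = 1)
    (hπ : finrank K π = 3) (hxπ : x ≤ π) :
    {l : Submodule K (Fin 4 → K) | finrank K l = 2 ∧ x ≤ l ∧ l ≤ π}.ncard
      = Fintype.card K + 1 := by
  have h := count_between' hxπ 1 hx
  rw [hπ] at h
  set q := Fintype.card K with hqdef
  have hq : 2 ≤ q := Fintype.one_lt_card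
  have hle1 : q ≤ q^2 := Nat.le_self_pow two_ne_zero q
  have hle2 : q ≤ q^3 := Nat.le_self_pow three_ne_zero q
  have key : (q + 1) * (q^2 - q^1) = q^3 - q^1 := by
    zify [hle1, hle2, pow_one]; ring
  have hpos : 0 < q^2 - q^1 := by
    have : q^1 < q^2 := Nat.pow_lt_pow_right (by omega) (by omega)
    omega
  exact Nat.eq_of_mul_eq_mul_right hpos (h.trans key.symm)

lemma count_lines_thru' {x : Submodule K (Fin 4 → K)} (hx : finrank K x = 1) :
    {l : Submodule K (Fin 4 → K) | finrank K l = 2 ∧ x ≤ l}.ncard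
      = Fintype.card K ^ 2 + Fintype.card K + 1 := by
  have h := count_between' (le_top (a := x)) 1 hx
  rw [finrank_top, Module.finrank_fin_fun] at h
  have hset : {l : Submodule K (Fin 4 → K) | finrank K l = 2 ∧ x ≤ l ∧ l ≤ ⊤}
      = {l : Submodule K (Fin 4 → K) | finrank K l = 2 ∧ x ≤ l} := by
    ext l; simp
  rw [hset] at h
  set q := Fintype.card K with hqdef
  have hq : 2 ≤ q := Fintype.one_lt_card
  have hle1 : q ≤ q^2 := Nat.le_self_pow two_ne_zero q
  have hle2 : q ≤ q^4 := Nat.le_self_pow four_ne_zero q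
  have key : (q^2 + q + 1) * (q^2 - q^1) = q^4 - q^1 := by
    zify [hle1, hle2, pow_one]; ring
  have hpos : 0 < q^2 - q^1 := by
    have : q^1 < q^2 := Nat.pow_lt_pow_right (by omega) (by omega)
    omega
  exact Nat.eq_of_mul_eq_mul_right hpos (h.trans key.symm)

lemma count_planes_thru_line' {m : Submodule K (Fin 4 → K)} (hm : finrank K m = 2) :
    {ρ : Submodule K (Fin 4 → K) | finrank K ρ = 3 ∧ m ≤ ρ}.ncard
      = Fintype.card K + 1 := by
  have h := count_between' (le_top (a := m)) 2 hm
  rw [finrank_top, Module.finrank_fin_fun] at h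
  have hset : {ρ : Submodule K (Fin 4 → K) | finrank K ρ = 2 + 1 ∧ m ≤ ρ ∧ ρ ≤ ⊤}
      = {ρ : Submodule K (Fin 4 → K) | finrank K ρ = 3 ∧ m ≤ ρ} := by
    ext ρ; simp
  rw [hset] at h
  set q := Fintype.card K with hqdef
  have hq : 2 ≤ q := Fintype.one_lt_card
  have hle1 : q^2 ≤ q^3 := Nat.pow_le_pow_right (by omega) (by omega)
  have hle2 : q^2 ≤ q^4 := Nat.pow_le_pow_right (by omega) (by omega)
  have key : (q + 1) * (q^3 - q^2) = q^4 - q^2 := by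
    zify [hle1, hle2]; ring
  have hpos : 0 < q^3 - q^2 := by
    have : q^2 < q^3 := Nat.pow_lt_pow_right (by omega) (by omega)
    omega
  exact Nat.eq_of_mul_eq_mul_right hpos (h.trans key.symm)

lemma span_two_lines' {x m₁ m₂ : Submodule K (Fin 4 → K)} (hx : finrank K x = 1)
    (h1 : finrank K m₁ = 2) (h2 : finrank K m₂ = 2) (hx1 : x ≤ m₁) (hx2 : x ≤ m₂)
    (hne : m₁ ≠ m₂) : finrank K ↥(m₁ ⊔ m₂) = 3 := by
  have hinf_le : m₁ ⊓ m₂ ≤ m₁ := inf_le_left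
  have hinf_fr : finrank K ↥(m₁ ⊓ m₂) = 1 := by
    have hge : 1 ≤ finrank K ↥(m₁ ⊓ m₂) := by
      have := Submodule.finrank_mono (le_inf hx1 hx2)
      omega
    have hle : finrank K ↥(m₁ ⊓ m₂) ≤ 2 := h1 ▸ Submodule.finrank_mono hinf_le
    rcases Nat.lt_or_ge (finrank K ↥(m₁ ⊓ m₂)) 2 with h | h
    · omega
    · exfalso
      have : m₁ ⊓ m₂ = m₁ :=
        Submodule.eq_of_le_of_finrank_eq hinf_le (by omega)
      exact hne (Submodule.eq_of_le_of_finrank_eq (this ▸ inf_le_right) (h1.trans h2.symm))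
  have := Submodule.finrank_sup_add_finrank_inf_eq m₁ m₂
  omega

lemma unique_plane' {x m₁ m₂ : Submodule K (Fin 4 → K)} (hx : finrank K x = 1)
    (h1 : finrank K m₁ = 2) (h2 : finrank K m₂ = 2) (hx1 : x ≤ m₁) (hx2 : x ≤ m₂)
    (hne : m₁ ≠ m₂) :
    {ρ : Submodule K (Fin 4 → K) | finrank K ρ = 3 ∧ m₁ ≤ ρ ∧ m₂ ≤ ρ} = {m₁ ⊔ m₂} := by
  have hsup := span_two_lines' hx h1 h2 hx1 hx2 hne
  ext ρ
  simp only [Set.mem_setOf_eq, Set.mem_singleton_iff]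
  constructor
  · rintro ⟨hρ, hl1, hl2⟩
    exact (Submodule.eq_of_le_of_finrank_eq (sup_le hl1 hl2) (hsup.trans hρ.symm)).symm
  · rintro rfl
    exact ⟨hsup, le_sup_left, le_sup_right⟩

lemma product_card_fst' {α β : Type*} [DecidableEq α] [DecidableEq β]
    (s : Finset α) (t : Finset β) (r : α → β → Prop) [∀ a b, Decidable (r a b)] :
    ((s ×ˢ t).filter fun p => r p.1 p.2).card
      = ∑ a ∈ s, (t.filter fun b => r a b).card := by
  rw [Finset.card_eq_sum_card_fiberwise
    (f := Prod.fst) (t := s) (fun p hp => (Finset.mem_product.1 (Finset.mem_filter.1 hp).1).1)]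
  refine Finset.sum_congr rfl fun a ha => ?_
  have : (((s ×ˢ t).filter fun p => r p.1 p.2).filter fun p => p.1 = a)
      = (t.filter fun b => r a b).image fun b => (a, b) := by
    ext ⟨u, v⟩
    simp only [Finset.mem_filter, Finset.mem_product, Finset.mem_image]
    constructor
    · rintro ⟨⟨⟨hu, hv⟩, hr⟩, rfl⟩
      exact ⟨v, ⟨hv, hr⟩, rfl⟩
    · rintro ⟨b, ⟨hb, hr⟩, h⟩
      obtain ⟨rfl, rfl⟩ := Prod.mk.injEq .. ▸ h
      exact ⟨⟨⟨ha, hb⟩, hr⟩, rfl⟩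
  rw [this, Finset.card_image_of_injective _ (fun b c h => (Prod.mk.injEq .. ▸ h).2)]

lemma product_card_snd' {α β : Type*} [DecidableEq α] [DecidableEq β]
    (s : Finset α) (t : Finset β) (r : α → β → Prop) [∀ a b, Decidable (r a b)] :
    ((s ×ˢ t).filter fun p => r p.1 p.2).card
      = ∑ b ∈ t, (s.filter fun a => r a b).card := by
  rw [Finset.card_eq_sum_card_fiberwise
    (f := Prod.snd) (t := t) (fun p hp => (Finset.mem_product.1 (Finset.mem_filter.1 hp).1).2)]
  refine Finset.sum_congr rfl fun b hb => ?_
  have : (((s ×ˢ t).filter fun p => r p.1 p.2).filter fun p => p.2 = b)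
      = (s.filter fun a => r a b).image fun a => (a, b) := by
    ext ⟨u, v⟩
    simp only [Finset.mem_filter, Finset.mem_product, Finset.mem_image]
    constructor
    · rintro ⟨⟨⟨hu, hv⟩, hr⟩, rfl⟩
      exact ⟨u, ⟨hu, hr⟩, rfl⟩
    · rintro ⟨a, ⟨hb', hr⟩, h⟩
      obtain ⟨rfl, rfl⟩ := Prod.mk.injEq .. ▸ h
      exact ⟨⟨⟨hb', hb⟩, hr⟩, rfl⟩
  rw [this, Finset.card_image_of_injective _ (fun a c h => (Prod.mk.injEq .. ▸ h).1)]

lemma sum_planes_const' {x : Submodule K (Fin 4 → K)} (hx : finrank K x = 1)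
    (A : Set (Submodule K (Fin 4 → K)))
    (hA : ∀ m ∈ A, finrank K m = 2 ∧ x ≤ m) {c : ℕ}
    (hc : ∀ ρ : Submodule K (Fin 4 → K), finrank K ρ = 3 → x ≤ ρ →
      (A ∩ {m | m ≤ ρ}).ncard = c) :
    A.ncard * (Fintype.card K + 1)
      = {ρ : Submodule K (Fin 4 → K) | finrank K ρ = 3 ∧ x ≤ ρ}.ncard * c := by
  set P := {ρ : Submodule K (Fin 4 → K) | finrank K ρ = 3 ∧ x ≤ ρ} with hP
  have e1 := product_card_fst' A.toFinset P.toFinset (· ≤ ·)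
  have e2 := product_card_snd' A.toFinset P.toFinset (· ≤ ·)
  have h1 : ∀ m ∈ A.toFinset,
      (P.toFinset.filter fun ρ => m ≤ ρ).card = Fintype.card K + 1 := by
    intro m hm
    rw [Set.mem_toFinset] at hm
    obtain ⟨hm2, hxm⟩ := hA m hm
    have heq : P.toFinset.filter (fun ρ => m ≤ ρ)
        = {ρ : Submodule K (Fin 4 → K) | finrank K ρ = 3 ∧ m ≤ ρ}.toFinset := by
      ext ρ
      simp only [Finset.mem_filter, Set.mem_toFinset, hP, Set.mem_setOf_eq]
      exact ⟨fun h => ⟨h.1.1, h.2⟩, fun h => ⟨⟨h.1, le_trans hxm h.2⟩, h.2⟩⟩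
    rw [heq, ← Set.ncard_eq_toFinset_card', count_planes_thru_line' hm2]
  have h2 : ∀ ρ ∈ P.toFinset, (A.toFinset.filter fun m => m ≤ ρ).card = c := by
    intro ρ hρ
    rw [Set.mem_toFinset] at hρ
    have heq : A.toFinset.filter (fun m => m ≤ ρ) = (A ∩ {m | m ≤ ρ}).toFinset := by
      ext m
      simp only [Finset.mem_filter, Set.mem_toFinset, Set.mem_inter_iff, Set.mem_setOf_eq]
    rw [heq, ← Set.ncard_eq_toFinset_card', hc ρ hρ.1 hρ.2]
  have stot : A.toFinset.card * (Fintype.card K + 1) = P.toFinset.card * c := by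
    rw [← Finset.sum_const_nat h1, ← Finset.sum_const_nat h2, ← e1, ← e2]
  rw [Set.ncard_eq_toFinset_card', Set.ncard_eq_toFinset_card']
  exact stot

lemma count_planes_thru_point' {x : Submodule K (Fin 4 → K)} (hx : finrank K x = 1) :
    {ρ : Submodule K (Fin 4 → K) | finrank K ρ = 3 ∧ x ≤ ρ}.ncard
      = Fintype.card K ^ 2 + Fintype.card K + 1 := by
  set L := {l : Submodule K (Fin 4 → K) | finrank K l = 2 ∧ x ≤ l} with hL
  have hc : ∀ ρ : Submodule K (Fin 4 → K), finrank K ρ = 3 → x ≤ ρ →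
      (L ∩ {m | m ≤ ρ}).ncard = Fintype.card K + 1 := by
    intro ρ h3 hxρ
    have heq : L ∩ {m | m ≤ ρ}
        = {l : Submodule K (Fin 4 → K) | finrank K l = 2 ∧ x ≤ l ∧ l ≤ ρ} := by
      ext l
      simp only [hL, Set.mem_inter_iff, Set.mem_setOf_eq]
      tauto
    rw [heq, count_lines_in_plane' hx h3 hxρ]
  have h := sum_planes_const' hx L (fun m hm => hm) hc
  rw [count_lines_thru' hx] at h
  have hpos : 0 < Fintype.card K + 1 := by omega
  exact (Nat.eq_of_mul_eq_mul_right hpos h.symm)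


lemma arith_bound' {qz nz : ℤ} (h1 : 1 ≤ nz) (h2 : nz ≤ qz + 1) :
    nz * nz ≤ (qz + 2) * nz - (qz + 1) := by
  nlinarith [mul_nonneg (by linarith : (0:ℤ) ≤ nz - 1) (by linarith : (0:ℤ) ≤ qz + 1 - nz)]

lemma arith_final' {qz cz : ℤ} (h3 : 3 ≤ qz) (h2 : 2 ≤ cz) (hcq : cz ≤ qz)
    (key : qz * (qz + 1) + (qz + 1) * (qz + 1) - cz * cz
      ≤ (qz + 2) * ((qz + 1) * (qz + 1) - cz) - (qz + 1) * (qz ^ 2 + qz)) : False := by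
  nlinarith [mul_nonneg (by linarith : (0:ℤ) ≤ cz - 2) (by linarith : (0:ℤ) ≤ qz - cz)]

end Aux

/-- If `π` is a secant plane and `x` a black point of `π`, then
there are exactly `q` lines of `π` through `x` belonging to `S`. -/
theorem stmt_13 (K : Type) [Field K] [Fintype K] (q : ℕ) (hq : Fintype.card K = q)
    (hq_odd : Odd q) (S : Set (Submodule K (Fin 4 → K))) (hS : S ⊆ pgLine K)
    (h1 : P1 K S q) (h2 : P2 K S q) (h2a : P2a K S q) (h2b : P2b K S q) :
    ∀ π, IsSecant K S q π → ∀ x, IsBlack K S q x → x ≤ π →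
      {l | l ∈ S ∧ l ≤ π ∧ x ≤ l}.ncard = q := by
  intro π hπsec x hxbl hxπ
  classical
  obtain ⟨hπ3, hπcard⟩ := hπsec
  obtain ⟨hx1, hxq2⟩ := hxbl
  have hπ3' : Module.finrank K ↥π = 3 := hπ3
  have hx1' : Module.finrank K ↥x = 1 := hx1
  have hq2 : 2 ≤ q := hq ▸ Fintype.one_lt_card
  obtain ⟨k, hk⟩ := hq_odd
  have hk1 : 1 ≤ k := by omega
  have hq3 : 3 ≤ q := by omega
  have htarg : {l : Submodule K (Fin 4 → K) | l ∈ S ∧ l ≤ π ∧ x ≤ l} = pencilS K S x π := by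
    ext l; simp only [pencilS, Set.mem_setOf_eq]; tauto
  rw [htarg]
  by_contra hne
  have htval := h2b π hπ3 hπcard x hx1 hxπ
  have htk : (pencilS K S x π).ncard = k ∨ (pencilS K S x π).ncard = k + 1 := by
    rcases htval with h|h|h
    · left; omega
    · right; omega
    · exact absurd h hne
  set P := {ρ : Submodule K (Fin 4 → K) | Module.finrank K ↥ρ = 3 ∧ x ≤ ρ} with hPdef
  set T := {m : Submodule K (Fin 4 → K) | Module.finrank K ↥m = 2 ∧ x ≤ m ∧ m ∉ S} with hTdef
  have hTcard : T.ncard = q + 1 := by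
    have hsub : linesThru K S x ⊆
        {l : Submodule K (Fin 4 → K) | Module.finrank K ↥l = 2 ∧ x ≤ l} :=
      fun l hl => ⟨hS hl.1, hl.2⟩
    have hTeq : T = {l : Submodule K (Fin 4 → K) | Module.finrank K ↥l = 2 ∧ x ≤ l}
        \ linesThru K S x := by
      ext m
      simp only [hTdef, Set.mem_setOf_eq, Set.mem_diff, linesThru]
      tauto
    rw [hTeq, Set.ncard_diff hsub, count_lines_thru' hx1', hxq2, hq]
    generalize q ^ 2 = a at *
    omega
  have hPcard : P.ncard = q ^ 2 + q + 1 := by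
    rw [hPdef, count_planes_thru_point' hx1', hq]
  set Pf := P.toFinset with hPf
  set Tf := T.toFinset with hTf
  have hPfcard : Pf.card = q ^ 2 + q + 1 := by
    rw [hPf, ← Set.ncard_eq_toFinset_card', hPcard]
  have hTfcard : Tf.card = q + 1 := by
    rw [hTf, ← Set.ncard_eq_toFinset_card', hTcard]
  set Nn : Submodule K (Fin 4 → K) → ℕ := fun ρ => (Tf.filter fun m => m ≤ ρ).card with hNn
  -- key per-plane facts
  have hkey : ∀ ρ : Submodule K (Fin 4 → K), Module.finrank K ↥ρ = 3 → x ≤ ρ →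
      Nn ρ + (pencilS K S x ρ).ncard = q + 1 ∧ (pencilS K S x ρ).ncard ≤ q := by
    intro ρ h3 hxρ
    have hpen : {l : Submodule K (Fin 4 → K) |
        Module.finrank K ↥l = 2 ∧ x ≤ l ∧ l ≤ ρ}.ncard = q + 1 := by
      rw [count_lines_in_plane' hx1' h3 hxρ, hq]
    have hsub : pencilS K S x ρ ⊆ {l : Submodule K (Fin 4 → K) |
        Module.finrank K ↥l = 2 ∧ x ≤ l ∧ l ≤ ρ} :=
      fun l hl => ⟨hS hl.1, hl.2.1, hl.2.2⟩
    have hdiff : {l : Submodule K (Fin 4 → K) |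
        Module.finrank K ↥l = 2 ∧ x ≤ l ∧ l ≤ ρ} \ pencilS K S x ρ
        = T ∩ {m : Submodule K (Fin 4 → K) | m ≤ ρ} := by
      ext m
      simp only [hTdef, Set.mem_diff, Set.mem_setOf_eq, Set.mem_inter_iff, pencilS]
      tauto
    have hNeq : Nn ρ = (T ∩ {m : Submodule K (Fin 4 → K) | m ≤ ρ}).ncard := by
      have hfe : Tf.filter (fun m => m ≤ ρ)
          = (T ∩ {m : Submodule K (Fin 4 → K) | m ≤ ρ}).toFinset := by
        ext m
        simp only [Finset.mem_filter, hTf, Set.mem_toFinset, Set.mem_inter_iff,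
          Set.mem_setOf_eq]
      show (Tf.filter fun m => m ≤ ρ).card = _
      rw [hfe, ← Set.ncard_eq_toFinset_card']
    have hple : (pencilS K S x ρ).ncard ≤ q + 1 := by
      rw [← hpen]
      exact Set.ncard_le_ncard hsub (Set.toFinite _)
    have hdcard : (T ∩ {m : Submodule K (Fin 4 → K) | m ≤ ρ}).ncard
        = q + 1 - (pencilS K S x ρ).ncard := by
      rw [← hdiff, Set.ncard_diff hsub, hpen]
    have hsq : (pencilS K S x ρ).ncard ≤ q := by
      rcases h2 ρ h3 with hc | hc
      · rcases h2b ρ h3 hc x hx1 hxρ with h|h|h <;> omega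
      · rcases h2a ρ h3 hc x hx1 hxρ with h|h <;> omega
    exact ⟨by omega, hsq⟩
  -- Sum 1
  have e1 := product_card_fst' Tf Pf (· ≤ ·)
  have e2 := product_card_snd' Tf Pf (· ≤ ·)
  have h1 : ∀ m ∈ Tf, (Pf.filter fun ρ => m ≤ ρ).card = q + 1 := by
    intro m hm
    rw [hTf, Set.mem_toFinset, hTdef, Set.mem_setOf_eq] at hm
    have heq : Pf.filter (fun ρ => m ≤ ρ)
        = {ρ : Submodule K (Fin 4 → K) | Module.finrank K ↥ρ = 3 ∧ m ≤ ρ}.toFinset := by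
      ext ρ
      simp only [Finset.mem_filter, hPf, Set.mem_toFinset, hPdef, Set.mem_setOf_eq]
      exact ⟨fun h => ⟨h.1.1, h.2⟩, fun h => ⟨⟨h.1, le_trans hm.2.1 h.2⟩, h.2⟩⟩
    rw [heq, ← Set.ncard_eq_toFinset_card', count_planes_thru_line' hm.1, hq]
  have hSum1 : ∑ ρ ∈ Pf, Nn ρ = (q + 1) * (q + 1) := by
    have h12 := e1.symm.trans e2
    rw [Finset.sum_const_nat h1, hTfcard] at h12
    exact h12.symm
  -- Sum 2
  have f1 := product_card_fst' Tf.offDiag Pf (fun pr ρ => pr.1 ≤ ρ ∧ pr.2 ≤ ρ)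
  have f2 := product_card_snd' Tf.offDiag Pf (fun pr ρ => pr.1 ≤ ρ ∧ pr.2 ≤ ρ)
  have g1 : ∀ pr ∈ Tf.offDiag, (Pf.filter fun ρ => pr.1 ≤ ρ ∧ pr.2 ≤ ρ).card = 1 := by
    intro pr hpr
    rw [Finset.mem_offDiag] at hpr
    obtain ⟨ha, hb, hab⟩ := hpr
    rw [hTf, Set.mem_toFinset, hTdef, Set.mem_setOf_eq] at ha hb
    have heq : Pf.filter (fun ρ => pr.1 ≤ ρ ∧ pr.2 ≤ ρ)
        = {ρ : Submodule K (Fin 4 → K) |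
            Module.finrank K ↥ρ = 3 ∧ pr.1 ≤ ρ ∧ pr.2 ≤ ρ}.toFinset := by
      ext ρ
      simp only [Finset.mem_filter, hPf, Set.mem_toFinset, hPdef, Set.mem_setOf_eq]
      exact ⟨fun h => ⟨h.1.1, h.2⟩, fun h => ⟨⟨h.1, le_trans ha.2.1 h.2.1⟩, h.2⟩⟩
    rw [heq, ← Set.ncard_eq_toFinset_card',
      unique_plane' hx1' ha.1 hb.1 ha.2.1 hb.2.1 hab, Set.ncard_singleton]
  have g2 : ∀ ρ ∈ Pf, (Tf.offDiag.filter fun pr => pr.1 ≤ ρ ∧ pr.2 ≤ ρ).card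
      = Nn ρ * Nn ρ - Nn ρ := by
    intro ρ hρ
    have heq : Tf.offDiag.filter (fun pr => pr.1 ≤ ρ ∧ pr.2 ≤ ρ)
        = (Tf.filter fun m => m ≤ ρ).offDiag := by
      ext pr
      simp only [Finset.mem_filter, Finset.mem_offDiag]
      tauto
    rw [heq, Finset.offDiag_card]
  have hSum2 : ∑ ρ ∈ Pf, (Nn ρ * Nn ρ - Nn ρ) = (q + 1) * (q + 1) - (q + 1) := by
    have h12 := f1.symm.trans f2
    rw [Finset.sum_const_nat g1, mul_one, Finset.offDiag_card, hTfcard] at h12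
    rw [← Finset.sum_congr rfl g2, ← h12]
  have hsq : ∀ n : ℕ, n ≤ n * n := by
    intro n
    rcases n with _ | n
    · simp
    · exact Nat.le_mul_of_pos_left _ (Nat.succ_pos n)
  have hSum2' : ∑ ρ ∈ Pf, Nn ρ * Nn ρ = q * (q + 1) + (q + 1) * (q + 1) := by
    have hadd : ∑ ρ ∈ Pf, (Nn ρ * Nn ρ - Nn ρ) + ∑ ρ ∈ Pf, Nn ρ
        = ∑ ρ ∈ Pf, Nn ρ * Nn ρ := by
      rw [← Finset.sum_add_distrib]
      exact Finset.sum_congr rfl fun ρ _ => Nat.sub_add_cancel (hsq (Nn ρ))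
    have hql : (q + 1) * (q + 1) - (q + 1) = q * (q + 1) := by
      have : (q + 1) * (q + 1) = q * (q + 1) + (q + 1) := by ring
      omega
    rw [← hadd, hSum2, hSum1, hql]
  -- the plane π
  have hπP : π ∈ Pf := by
    rw [hPf, Set.mem_toFinset, hPdef, Set.mem_setOf_eq]
    exact ⟨hπ3', hxπ⟩
  have hπkey := (hkey π hπ3' hxπ).1
  set c := Nn π with hcdef
  have hc2 : 2 ≤ c := by omega
  have hcq : c ≤ q := by omega
  -- pass to ℤ
  have hS1z : ∑ ρ ∈ Pf, (Nn ρ : ℤ) = ((q : ℤ) + 1) * ((q : ℤ) + 1) := by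
    have := hSum1
    zify at this
    exact this
  have hS2z : ∑ ρ ∈ Pf, (Nn ρ : ℤ) * (Nn ρ : ℤ)
      = (q : ℤ) * ((q : ℤ) + 1) + ((q : ℤ) + 1) * ((q : ℤ) + 1) := by
    have := hSum2'
    zify at this
    exact this
  have hE1 : ∑ ρ ∈ Pf.erase π, (Nn ρ : ℤ) = ((q : ℤ) + 1) * ((q : ℤ) + 1) - (c : ℤ) := by
    have h := Finset.add_sum_erase Pf (fun ρ => (Nn ρ : ℤ)) hπP
    rw [hS1z, ← hcdef] at h
    linarith only [h]
  have hE2 : ∑ ρ ∈ Pf.erase π, (Nn ρ : ℤ) * (Nn ρ : ℤ)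
      = (q : ℤ) * ((q : ℤ) + 1) + ((q : ℤ) + 1) * ((q : ℤ) + 1) - (c : ℤ) * (c : ℤ) := by
    have h := Finset.add_sum_erase Pf (fun ρ => (Nn ρ : ℤ) * (Nn ρ : ℤ)) hπP
    rw [hS2z, ← hcdef] at h
    linarith only [h]
  have hEcard : ((Pf.erase π).card : ℤ) = (q : ℤ) ^ 2 + (q : ℤ) := by
    rw [Finset.card_erase_of_mem hπP, hPfcard]
    push_cast
    ring_nf
  have hbz : ∀ ρ ∈ Pf.erase π, (Nn ρ : ℤ) * (Nn ρ : ℤ)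
      ≤ ((q : ℤ) + 2) * (Nn ρ : ℤ) - ((q : ℤ) + 1) := by
    intro ρ hρ
    have hρP := Finset.mem_of_mem_erase hρ
    rw [hPf, Set.mem_toFinset, hPdef, Set.mem_setOf_eq] at hρP
    have hk2 := (hkey ρ hρP.1 hρP.2).1
    have hk3 := (hkey ρ hρP.1 hρP.2).2
    have hlo : 1 ≤ Nn ρ := by omega
    have hhi : Nn ρ ≤ q + 1 := by omega
    have hlo' : (1 : ℤ) ≤ (Nn ρ : ℤ) := by exact_mod_cast hlo
    have hhi' : (Nn ρ : ℤ) ≤ (q : ℤ) + 1 := by exact_mod_cast hhi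
    exact arith_bound' hlo' hhi'
  have hsle : ∑ ρ ∈ Pf.erase π, (Nn ρ : ℤ) * (Nn ρ : ℤ)
      ≤ ∑ ρ ∈ Pf.erase π, (((q : ℤ) + 2) * (Nn ρ : ℤ) - ((q : ℤ) + 1)) :=
    Finset.sum_le_sum hbz
  have hrhs : ∑ ρ ∈ Pf.erase π, (((q : ℤ) + 2) * (Nn ρ : ℤ) - ((q : ℤ) + 1))
      = ((q : ℤ) + 2) * (((q : ℤ) + 1) * ((q : ℤ) + 1) - (c : ℤ))
        - ((q : ℤ) + 1) * ((q : ℤ) ^ 2 + (q : ℤ)) := by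
    rw [Finset.sum_sub_distrib, ← Finset.mul_sum, hE1, Finset.sum_const,
      nsmul_eq_mul, hEcard]
    ring
  have hc2' : (2 : ℤ) ≤ (c : ℤ) := by exact_mod_cast hc2
  have hcq' : (c : ℤ) ≤ (q : ℤ) := by exact_mod_cast hcq
  have hq3' : (3 : ℤ) ≤ (q : ℤ) := by exact_mod_cast hq3
  rw [hE2, hrhs] at hsle
  exact arith_final' hq3' hc2' hcq' hsle
end

section
/- For every secant plane π, if λ_π denotes the number of black points contained in π, then |S| = λ_π·(q^2-q)/2 + (q^4+q^3+q^2+q)/2. In particular, the number of black points in a secant plane is the same for all secant planes. -/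
open Submodule Set

section Aux

open Module

variable {K : Type} [Field K] [Fintype K]

lemma aux_count (M : Type*) [AddCommGroup M] [Module K M] [Finite M] :
    {p : Submodule K M | finrank K ↥p = 1}.ncard * (Fintype.card K - 1)
      = Nat.card M - 1 := by
  classical
  cases nonempty_fintype M
  letI : Fintype (Submodule K M) := Fintype.ofFinite _
  haveI : Module.Finite K M := Module.Finite.of_finite
  haveI : FiniteDimensional K M := inferInstance
  set T : Finset (Submodule K M) := Finset.univ.filter (fun p => finrank K ↥p = 1) with hT
  set s : Finset M := Finset.univ.filter (fun v => v ≠ 0) with hs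
  have h1 : s.card = Fintype.card M - 1 := by
    rw [hs, Finset.filter_ne' Finset.univ 0, Finset.card_erase_of_mem (Finset.mem_univ _),
      Finset.card_univ]
  have h2 : ∀ v ∈ s, span K {v} ∈ T := by
    intro v hv
    simp only [hs, Finset.mem_filter] at hv
    simp only [hT, Finset.mem_filter, Finset.mem_univ, true_and]
    exact finrank_span_singleton hv.2
  have h3 := Finset.card_eq_sum_card_fiberwise h2
  have h4 : ∀ p ∈ T, (s.filter (fun v => span K {v} = p)).card = Fintype.card K - 1 := by
    intro p hp
    simp only [hT, Finset.mem_filter, Finset.mem_univ, true_and] at hp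
    have hcard : Fintype.card ↥p = Fintype.card K := by
      rw [card_eq_pow_finrank (K := K) (V := ↥p), hp, pow_one]
    have heq : s.filter (fun v => span K {v} = p) =
        (Finset.univ.filter (fun v : M => v ∈ p)).filter (fun v => v ≠ 0) := by
      ext v
      simp only [hs, Finset.mem_filter, Finset.mem_univ, true_and]
      constructor
      · rintro ⟨hv0, rfl⟩
        exact ⟨mem_span_singleton_self v, hv0⟩
      · rintro ⟨hvp, hv0⟩
        refine ⟨hv0, ?_⟩
        exact eq_of_le_of_finrank_eq ((span_singleton_le_iff_mem v p).2 hvp)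
          (by rw [hp, finrank_span_singleton hv0])
    rw [heq, Finset.filter_ne', Finset.card_erase_of_mem, ]
    · rw [show (Finset.univ.filter (fun v : M => v ∈ p)).card = Fintype.card ↥p from
        (Fintype.card_subtype _).symm, hcard]
    · simp [p.zero_mem]
  rw [h3, Finset.sum_congr rfl h4, Finset.sum_const, smul_eq_mul] at h1
  rw [Set.ncard_eq_toFinset_card' ]
  have : {p : Submodule K M | finrank K ↥p = 1}.toFinset = T := by
    ext p; simp [hT]
  rw [this, h1, Nat.card_eq_fintype_card]

lemma count_points_le (W : Submodule K (Fin 4 → K)) :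
    {p | p ∈ pgPoint K ∧ p ≤ W}.ncard * (Fintype.card K - 1)
      = Fintype.card K ^ (finrank K ↥W) - 1 := by
  haveI : Finite (Fin 4 → K) := inferInstance
  haveI : Finite ↥W := inferInstance
  have hinj : Function.Injective (Submodule.map W.subtype) :=
    Submodule.map_injective_of_injective Subtype.val_injective
  have himg : (Submodule.map W.subtype) '' {p' : Submodule K ↥W | finrank K ↥p' = 1}
      = {p | p ∈ pgPoint K ∧ p ≤ W} := by
    ext p
    constructor
    · rintro ⟨p', hp', rfl⟩
      exact ⟨by simpa [pgPoint] using (Submodule.finrank_map_subtype_eq W p').trans hp',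
        Submodule.map_subtype_le W p'⟩
    · rintro ⟨hp1, hpW⟩
      refine ⟨Submodule.comap W.subtype p, ?_, ?_⟩
      · have hmc : Submodule.map W.subtype (Submodule.comap W.subtype p) = p := by
          rw [Submodule.map_comap_subtype, inf_eq_right.2 hpW]
        have := Submodule.finrank_map_subtype_eq W (Submodule.comap W.subtype p)
        rw [hmc] at this
        exact this.symm.trans hp1
      · rw [Submodule.map_comap_subtype, inf_eq_right.2 hpW]
  letI : Fintype ↥W := Fintype.ofFinite _
  rw [← himg, Set.ncard_image_of_injective _ hinj]
  rw [aux_count (↥W), Nat.card_eq_fintype_card, card_eq_pow_finrank (K := K)]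

lemma card_points_of_finrank (W : Submodule K (Fin 4 → K)) {n m : ℕ}
    (hW : finrank K ↥W = n) (hm : (m + 1) * (Fintype.card K - 1) = Fintype.card K ^ n - 1) :
    {p | p ∈ pgPoint K ∧ p ≤ W}.ncard = m + 1 := by
  have h2 : 1 < Fintype.card K := Fintype.one_lt_card
  have := count_points_le (K := K) W
  rw [hW, ← hm] at this
  exact Nat.eq_of_mul_eq_mul_right (by omega) this

lemma points_on_line {l : Submodule K (Fin 4 → K)} (hl : finrank K ↥l = 2) :
    {p | p ∈ pgPoint K ∧ p ≤ l}.ncard = Fintype.card K + 1 := by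
  have h2 : 1 < Fintype.card K := Fintype.one_lt_card
  obtain ⟨m, hm⟩ : ∃ m, Fintype.card K = m + 2 := ⟨Fintype.card K - 2, by omega⟩
  have : {p | p ∈ pgPoint K ∧ p ≤ l}.ncard = (m + 2) + 1 := by
    refine card_points_of_finrank l hl ?_
    rw [hm]
    have e1 : m + 2 - 1 = m + 1 := by omega
    rw [e1]
    have h : (m + 2) ^ 2 = (m + 2 + 1) * (m + 1) + 1 := by ring
    omega
  omega

lemma points_on_plane {π : Submodule K (Fin 4 → K)} (hπ : finrank K ↥π = 3) :
    {p | p ∈ pgPoint K ∧ p ≤ π}.ncard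
      = Fintype.card K ^ 2 + Fintype.card K + 1 := by
  have h2 : 1 < Fintype.card K := Fintype.one_lt_card
  obtain ⟨m, hm⟩ : ∃ m, Fintype.card K = m + 2 := ⟨Fintype.card K - 2, by omega⟩
  have : {p | p ∈ pgPoint K ∧ p ≤ π}.ncard = ((m + 2) ^ 2 + (m + 2)) + 1 := by
    refine card_points_of_finrank π hπ ?_
    rw [hm]
    have e1 : m + 2 - 1 = m + 1 := by omega
    rw [e1]
    have h : (m + 2) ^ 3 = ((m + 2) ^ 2 + (m + 2) + 1) * (m + 1) + 1 := by ring
    omega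
  rw [hm]
  omega

omit [Fintype K] in
lemma finrank_amb : finrank K (Fin 4 → K) = 4 := by
  simp [Module.finrank_pi]

lemma line_meet_plane {l π : Submodule K (Fin 4 → K)} (hl : finrank K ↥l = 2)
    (hπ : finrank K ↥π = 3) (hnle : ¬ l ≤ π) :
    {p | p ∈ pgPoint K ∧ p ≤ l ∧ p ≤ π} = {l ⊓ π} := by
  have hlt : π < l ⊔ π :=
    lt_of_le_of_ne le_sup_right (fun h => hnle (h ▸ le_sup_left))
  have hsup4 : finrank K ↥(l ⊔ π) = 4 := by
    have hub : finrank K ↥(l ⊔ π) ≤ 4 := by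
      have := Submodule.finrank_le (l ⊔ π)
      rwa [finrank_amb] at this
    have hlb : 3 < finrank K ↥(l ⊔ π) := by
      have := Submodule.finrank_lt_finrank_of_lt hlt
      omega
    omega
  have hinf : finrank K ↥(l ⊓ π) = 1 := by
    have := Submodule.finrank_sup_add_finrank_inf_eq l π
    rw [hl, hπ, hsup4] at this
    omega
  ext p
  simp only [Set.mem_setOf_eq, Set.mem_singleton_iff, pgPoint]
  constructor
  · rintro ⟨hp1, hpl, hpπ⟩
    exact Submodule.eq_of_le_of_finrank_eq (le_inf hpl hpπ) (by rw [hinf]; exact hp1)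
  · rintro rfl
    exact ⟨hinf, inf_le_left, inf_le_right⟩

lemma key_count (S : Set (Submodule K (Fin 4 → K))) (hS : S ⊆ pgLine K)
    (h1 : P1 K S (Fintype.card K)) (hq_odd : Odd (Fintype.card K))
    {π : Submodule K (Fin 4 → K)} (hsec : IsSecant K S (Fintype.card K) π) :
    S.ncard = {p | IsBlack K S (Fintype.card K) p ∧ p ≤ π}.ncard *
        ((Fintype.card K ^ 2 - Fintype.card K) / 2) +
      (Fintype.card K ^ 4 + Fintype.card K ^ 3 + Fintype.card K ^ 2 + Fintype.card K) / 2 := by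
  classical
  haveI : Finite (Submodule K (Fin 4 → K)) :=
    Finite.of_injective (fun W => (W : Set (Fin 4 → K))) SetLike.coe_injective
  set q : ℕ := Fintype.card K with hqdef
  have hπ3 : finrank K ↥π = 3 := hsec.1
  have hPfin : {p | p ∈ pgPoint K ∧ p ≤ π}.Finite := Set.toFinite _
  have hSfin : S.Finite := Set.toFinite _
  set Pf := hPfin.toFinset with hPf
  set Sf := hSfin.toFinset with hSf
  have hdc : ∑ p ∈ Pf, (Sf.filter (fun l => p ≤ l)).card
      = ∑ l ∈ Sf, (Pf.filter (fun p => p ≤ l)).card := by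
    simp only [Finset.card_filter]
    exact Finset.sum_comm
  -- lines inside the plane meet `Pf` in `q+1` points
  have hlineπ : ∀ l ∈ Sf.filter (fun l => l ≤ π),
      (Pf.filter (fun p => p ≤ l)).card = q + 1 := by
    intro l hl
    rw [Finset.mem_filter, hSf, Set.Finite.mem_toFinset] at hl
    have hl2 : finrank K ↥l = 2 := hS hl.1
    have hfil : Pf.filter (fun p => p ≤ l)
        = ({p | p ∈ pgPoint K ∧ p ≤ l}).toFinite.toFinset := by
      ext p
      simp only [Finset.mem_filter, hPf, Set.Finite.mem_toFinset, Set.mem_setOf_eq]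
      exact ⟨fun h => ⟨h.1.1, h.2⟩, fun h => ⟨⟨h.1, h.2.trans hl.2⟩, h.2⟩⟩
    rw [hfil, ← Set.ncard_eq_toFinset_card, points_on_line hl2]
  -- lines not inside the plane meet `Pf` in a unique point
  have hlineout : ∀ l ∈ Sf.filter (fun l => ¬ l ≤ π),
      (Pf.filter (fun p => p ≤ l)).card = 1 := by
    intro l hl
    rw [Finset.mem_filter, hSf, Set.Finite.mem_toFinset] at hl
    have hl2 : finrank K ↥l = 2 := hS hl.1
    have hfil : Pf.filter (fun p => p ≤ l) = {l ⊓ π} := by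
      ext p
      simp only [Finset.mem_filter, hPf, Set.Finite.mem_toFinset, Finset.mem_singleton,
        Set.mem_setOf_eq]
      have hmp := Set.ext_iff.mp (line_meet_plane hl2 hπ3 hl.2) p
      simp only [Set.mem_setOf_eq, Set.mem_singleton_iff] at hmp
      rw [← hmp]
      tauto
    rw [hfil, Finset.card_singleton]
  -- count of lines of S inside the plane
  have hc1 : (Sf.filter (fun l => l ≤ π)).card = q * (q + 1) / 2 := by
    have hfil : Sf.filter (fun l => l ≤ π) = (linesIn K S π).toFinite.toFinset := by
      ext l
      simp only [Finset.mem_filter, hSf, Set.Finite.mem_toFinset, linesIn, Set.mem_setOf_eq]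
    rw [hfil, ← Set.ncard_eq_toFinset_card, hsec.2]
  have hcsplit : (Sf.filter (fun l => l ≤ π)).card
      + (Sf.filter (fun l => ¬ l ≤ π)).card = Sf.card :=
    Finset.card_filter_add_card_filter_not _
  have hScard : Sf.card = S.ncard := (Set.ncard_eq_toFinset_card _ _).symm
  -- RHS of double count
  have hRHS : ∑ l ∈ Sf, (Pf.filter (fun p => p ≤ l)).card
      = (q + 1) * (q * (q + 1) / 2) + (Sf.filter (fun l => ¬ l ≤ π)).card := by
    rw [← Finset.sum_filter_add_sum_filter_not Sf (fun l => l ≤ π)]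
    rw [Finset.sum_congr rfl hlineπ, Finset.sum_congr rfl hlineout]
    rw [Finset.sum_const, Finset.sum_const, smul_eq_mul, smul_eq_mul, hc1]
    ring
  -- LHS of double count: degrees of points
  have hdeg : ∀ p ∈ Pf, (Sf.filter (fun l => p ≤ l)).card = (linesThru K S p).ncard := by
    intro p hp
    have hfil : Sf.filter (fun l => p ≤ l) = (linesThru K S p).toFinite.toFinset := by
      ext l
      simp only [Finset.mem_filter, hSf, Set.Finite.mem_toFinset, linesThru, Set.mem_setOf_eq]
    rw [hfil, ← Set.ncard_eq_toFinset_card]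
  have hblack : ∀ p ∈ Pf.filter (fun p => IsBlack K S q p),
      (Sf.filter (fun l => p ≤ l)).card = q ^ 2 := by
    intro p hp
    rw [Finset.mem_filter] at hp
    rw [hdeg p hp.1]
    exact hp.2.2
  have hwhite : ∀ p ∈ Pf.filter (fun p => ¬ IsBlack K S q p),
      (Sf.filter (fun l => p ≤ l)).card = q * (q + 1) / 2 := by
    intro p hp
    rw [Finset.mem_filter] at hp
    have hppt : p ∈ pgPoint K := by
      have := hp.1
      rw [hPf, Set.Finite.mem_toFinset] at this
      exact this.1
    rw [hdeg p hp.1]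
    rcases h1.1 p hppt with h | h
    · exact h
    · exact absurd ⟨hppt, h⟩ hp.2
  have hLHS : ∑ p ∈ Pf, (Sf.filter (fun l => p ≤ l)).card
      = (Pf.filter (fun p => IsBlack K S q p)).card * q ^ 2
        + (Pf.filter (fun p => ¬ IsBlack K S q p)).card * (q * (q + 1) / 2) := by
    rw [← Finset.sum_filter_add_sum_filter_not Pf (fun p => IsBlack K S q p)]
    rw [Finset.sum_congr rfl hblack, Finset.sum_congr rfl hwhite]
    rw [Finset.sum_const, Finset.sum_const, smul_eq_mul, smul_eq_mul]
  -- number of points in the plane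
  have hPcard : Pf.card = q ^ 2 + q + 1 := by
    rw [hPf, ← Set.ncard_eq_toFinset_card, points_on_plane hπ3]
  have hPsplit : (Pf.filter (fun p => IsBlack K S q p)).card
      + (Pf.filter (fun p => ¬ IsBlack K S q p)).card = q ^ 2 + q + 1 := by
    rw [Finset.card_filter_add_card_filter_not, hPcard]
  -- identify the black-point count
  have hlam : (Pf.filter (fun p => IsBlack K S q p)).card
      = {p | IsBlack K S q p ∧ p ≤ π}.ncard := by
    have hfil : Pf.filter (fun p => IsBlack K S q p)
        = ({p | IsBlack K S q p ∧ p ≤ π}).toFinite.toFinset := by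
      ext p
      simp only [Finset.mem_filter, hPf, Set.Finite.mem_toFinset, Set.mem_setOf_eq]
      exact ⟨fun h => ⟨h.2, h.1.2⟩, fun h => ⟨⟨h.1.1, h.2⟩, h.1⟩⟩
    rw [hfil, ← Set.ncard_eq_toFinset_card]
  -- assemble
  obtain ⟨k, hk⟩ := hq_odd
  have h2H : q * (q + 1) = 2 * ((2 * k + 1) * (k + 1)) := by rw [hk]; ring
  have hH : q * (q + 1) / 2 = (2 * k + 1) * (k + 1) := by
    rw [h2H, Nat.mul_div_cancel_left _ (by norm_num : 0 < 2)]
  have h2A : q ^ 2 - q = 2 * ((2 * k + 1) * k) := by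
    have hpow : q ^ 2 = 2 * ((2 * k + 1) * k) + q := by rw [hk]; ring
    omega
  have hA : (q ^ 2 - q) / 2 = (2 * k + 1) * k := by
    rw [h2A, Nat.mul_div_cancel_left _ (by norm_num : 0 < 2)]
  have h2B : q ^ 4 + q ^ 3 + q ^ 2 + q = 2 * ((2 * k + 1) * (k + 1) * (q ^ 2 + 1)) := by
    rw [hk]; ring
  have hB : (q ^ 4 + q ^ 3 + q ^ 2 + q) / 2 = (2 * k + 1) * (k + 1) * (q ^ 2 + 1) := by
    rw [h2B, Nat.mul_div_cancel_left _ (by norm_num : 0 < 2)]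
  set lam := (Pf.filter (fun p => IsBlack K S q p)).card with hlamdef
  set w := (Pf.filter (fun p => ¬ IsBlack K S q p)).card with hwdef
  set c2 := (Sf.filter (fun l => ¬ l ≤ π)).card with hc2def
  have hE : lam * q ^ 2 + w * (q * (q + 1) / 2)
      = (q + 1) * (q * (q + 1) / 2) + c2 := by
    rw [← hLHS, hdc, hRHS]
  have hN : S.ncard = q * (q + 1) / 2 + c2 := by
    rw [← hScard, ← hcsplit, hc1]
  rw [← hlam, hA, hB, hN]
  have hE' : (lam : ℤ) * q ^ 2 + w * ((2 * k + 1) * (k + 1))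
      = (q + 1) * ((2 * k + 1) * (k + 1)) + c2 := by
    rw [hH] at hE
    exact_mod_cast hE
  have hP' : (lam : ℤ) + w = q ^ 2 + q + 1 := by exact_mod_cast hPsplit
  have hq' : (q : ℤ) = 2 * k + 1 := by exact_mod_cast hk
  have : ((q * (q + 1) / 2 + c2 : ℕ) : ℤ)
      = (lam : ℤ) * ((2 * k + 1) * k) + (2 * k + 1) * (k + 1) * ((q : ℤ) ^ 2 + 1) := by
    push_cast [hH]
    rw [hq'] at hE' hP' ⊢
    linear_combination (-1 : ℤ) * hE' + ((2 * (k : ℤ) + 1) * (k + 1)) * hP'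
  have hgoal : q * (q + 1) / 2 + c2
      = lam * ((2 * k + 1) * k) + (2 * k + 1) * (k + 1) * (q ^ 2 + 1) := by
    exact_mod_cast this
  rw [hgoal]


end Aux

/-- For every secant plane `π`, with `λ_π` the number of black
points of `π`, `|S| = λ_π(q^2-q)/2 + (q^4+q^3+q^2+q)/2`; in particular the
number of black points is the same in all secant planes. -/
theorem stmt_14 (K : Type) [Field K] [Fintype K] (q : ℕ) (hq : Fintype.card K = q)
    (hq_odd : Odd q) (S : Set (Submodule K (Fin 4 → K))) (hS : S ⊆ pgLine K)
    (h1 : P1 K S q) (h2 : P2 K S q) (h2a : P2a K S q) (h2b : P2b K S q) :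
    (∀ π, IsSecant K S q π →
      S.ncard = {p | IsBlack K S q p ∧ p ≤ π}.ncard * ((q ^ 2 - q) / 2) +
        (q ^ 4 + q ^ 3 + q ^ 2 + q) / 2) ∧
    (∀ π π', IsSecant K S q π → IsSecant K S q π' →
      {p | IsBlack K S q p ∧ p ≤ π}.ncard =
        {p | IsBlack K S q p ∧ p ≤ π'}.ncard) := by
  subst hq
  have part1 : ∀ π, IsSecant K S (Fintype.card K) π →
      S.ncard = {p | IsBlack K S (Fintype.card K) p ∧ p ≤ π}.ncard *
          ((Fintype.card K ^ 2 - Fintype.card K) / 2) +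
        (Fintype.card K ^ 4 + Fintype.card K ^ 3 + Fintype.card K ^ 2 + Fintype.card K) / 2 :=
    fun π hπ => key_count S hS h1 hq_odd hπ
  refine ⟨part1, ?_⟩
  intro π π' hπ hπ'
  have e := (part1 π hπ).symm.trans (part1 π' hπ')
  have hcard2 : 1 < Fintype.card K := Fintype.one_lt_card
  obtain ⟨k, hk⟩ := hq_odd
  have hq3 : 3 ≤ Fintype.card K := by omega
  have hX : 0 < (Fintype.card K ^ 2 - Fintype.card K) / 2 := by
    have e1 : Fintype.card K ^ 2 = Fintype.card K * Fintype.card K := sq (Fintype.card K)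
    have e2 : 3 * Fintype.card K ≤ Fintype.card K * Fintype.card K :=
      Nat.mul_le_mul_right _ hq3
    omega
  exact Nat.eq_of_mul_eq_mul_right hX (Nat.add_right_cancel e)
end
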